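/- arXiv:2211.09075 — 10 statements merged into one kernel-verified Lean document; each statement's English description precedes it below -/
import Mathlib

section
/- Let M be a reduced N×N matrix over ZMod 2. Then for all indices 1 ≤ i ≤ N and 1 ≤ j ≤ N, the rank of the submatrix M[≥i,≤j] equals the number of column indices k ≤ j such that M_k ≠ 0 and low(M_k) ≥ i. -/
open Matrix

/-- `i` is the pivot of column `j` of `M`: the largest row index with a nonzero entry.
(Row/column `p : Fin N` corresponds to index `p+1 ∈ {1,…,N}` of the paper.) -/
def IsLow {N : ℕ} (M : Matrix (Fin N) (Fin N) (ZMod 2)) (i j : Fin N) : Prop :=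
  M i j ≠ 0 ∧ ∀ i' : Fin N, M i' j ≠ 0 → i' ≤ i

/-- A matrix is reduced if its nonzero columns have pairwise distinct pivots. -/
def IsReducedMat {N : ℕ} (M : Matrix (Fin N) (Fin N) (ZMod 2)) : Prop :=
  ∀ i j j' : Fin N, IsLow M i j → IsLow M i j' → j = j'

/-- `rankLL M a b` is the rank of the lower-left submatrix `M[≥ a, ≤ b]` formed by the
rows with (1-based) index `≥ a` and the columns with (1-based) index `≤ b`. -/
noncomputable def rankLL {N : ℕ} (M : Matrix (Fin N) (Fin N) (ZMod 2)) (a b : ℕ) : ℕ :=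
  (Matrix.of fun (p : {p : Fin N // a ≤ (p : ℕ) + 1}) (q : {q : Fin N // (q : ℕ) + 1 ≤ b}) =>
    M p.1 q.1).rank

/-- `V` is upper-triangular. -/
def UpperTri {N : ℕ} (V : Matrix (Fin N) (Fin N) (ZMod 2)) : Prop :=
  ∀ a b : Fin N, b < a → V a b = 0

lemma exists_isLow {N : ℕ} (M : Matrix (Fin N) (Fin N) (ZMod 2)) {p k : Fin N}
    (h : M p k ≠ 0) : ∃ q : Fin N, IsLow M q k ∧ p ≤ q := by
  classical
  set s := Finset.univ.filter (fun r => M r k ≠ 0) with hs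
  have hne : s.Nonempty := ⟨p, by simp [hs, h]⟩
  refine ⟨s.max' hne, ⟨?_, ?_⟩, ?_⟩
  · have := s.max'_mem hne
    simpa [hs] using this
  · intro r hr
    exact s.le_max' r (by simp [hs, hr])
  · exact s.le_max' p (by simp [hs, h])

lemma linearIndependent_of_piv {F : Type*} [Field F] {ι ρ : Type*} [LinearOrder ρ]
    (v : ι → ρ → F) (piv : ι → ρ)
    (h1 : ∀ k, v k (piv k) ≠ 0)
    (h2 : ∀ k r, piv k < r → v k r = 0)
    (hinj : Function.Injective piv) :
    LinearIndependent F v := by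
  classical
  rw [linearIndependent_iff']
  intro s g hg k hk
  by_contra hgk
  set t := s.filter (fun a => g a ≠ 0) with ht
  have htne : t.Nonempty := ⟨k, by simp [ht, hk, hgk]⟩
  obtain ⟨m, hm, hmax⟩ := t.exists_max_image piv htne
  have hms : m ∈ s := (Finset.mem_filter.1 hm).1
  have hgm : g m ≠ 0 := (Finset.mem_filter.1 hm).2
  have h0 : ∑ a ∈ s, g a * v a (piv m) = 0 := by
    have := congrFun hg (piv m)
    simpa using this
  rw [Finset.sum_eq_single m] at h0
  · rcases mul_eq_zero.1 h0 with h | h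
    · exact hgm h
    · exact h1 m h
  · intro a ha hne
    by_cases hga : g a = 0
    · simp [hga]
    · have hat : a ∈ t := Finset.mem_filter.2 ⟨ha, hga⟩
      have hle : piv a ≤ piv m := hmax a hat
      have hlt : piv a < piv m := lt_of_le_of_ne hle (fun h => hne (hinj h))
      simp [h2 a (piv m) hlt]
  · intro h; exact absurd hms h

/-- For a reduced matrix `M`, the rank of `M[≥ i, ≤ j]` equals the number of columns
`k ≤ j` that are nonzero with pivot `≥ i`. -/
theorem rank_lowerLeft_eq_card_pivots {N : ℕ} (M : Matrix (Fin N) (Fin N) (ZMod 2))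
    (hM : IsReducedMat M) :
    ∀ i j : Fin N,
      rankLL M ((i : ℕ) + 1) ((j : ℕ) + 1) =
        Nat.card {k : Fin N // k ≤ j ∧ ∃ p : Fin N, IsLow M p k ∧ i ≤ p} := by
  classical
  intro i j
  set ρ := {p : Fin N // (i : ℕ) + 1 ≤ (p : ℕ) + 1} with hρ
  set ι := {q : Fin N // (q : ℕ) + 1 ≤ (j : ℕ) + 1} with hι
  set A : Matrix ρ ι (ZMod 2) :=
    Matrix.of (fun (p : ρ) (q : ι) => M p.1 q.1) with hA
  have hrank : rankLL M ((i : ℕ) + 1) ((j : ℕ) + 1) = A.rank := rfl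
  set S := {q : ι // Aᵀ q ≠ 0} with hS
  -- pivot data for nonzero columns
  have hSex : ∀ q : S, ∃ p : Fin N, (IsLow M p q.1.1 ∧ i ≤ p) := by
    rintro ⟨q, hq⟩
    obtain ⟨p, hp⟩ := Function.ne_iff.1 hq
    obtain ⟨r, hr, hpr⟩ := exists_isLow M hp
    have hip : i ≤ p.1 := by
      have := p.2
      exact Fin.mk_le_mk.mpr (Nat.succ_le_succ_iff.1 this) |>.trans_eq rfl
    exact ⟨r, hr, le_trans hip hpr⟩
  choose low hlow hlowi using hSex
  have hpivmem : ∀ q : S, (i : ℕ) + 1 ≤ (low q : ℕ) + 1 := fun q =>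
    Nat.succ_le_succ (hlowi q)
  set piv : S → ρ := fun q => ⟨low q, hpivmem q⟩ with hpiv
  have hli : LinearIndependent (ZMod 2) (fun q : S => Aᵀ q.1) := by
    apply linearIndependent_of_piv (piv := piv)
    · intro q
      exact (hlow q).1
    · intro q r hr
      by_contra hne
      have := (hlow q).2 r.1 hne
      exact absurd this (not_le.2 hr)
    · intro q q' h
      have : low q = low q' := congrArg Subtype.val h
      have hq : q.1.1 = q'.1.1 := by
        apply hM (low q) q.1.1 q'.1.1 (hlow q)
        rw [this]; exact hlow q'
      exact Subtype.ext (Subtype.ext hq)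
  have hspan : Submodule.span (ZMod 2) (Set.range Aᵀ) =
      Submodule.span (ZMod 2) (Set.range (fun q : S => Aᵀ q.1)) := by
    apply le_antisymm
    · rw [Submodule.span_le]
      rintro x ⟨q, rfl⟩
      by_cases hq : Aᵀ q = 0
      · rw [hq]; exact Submodule.zero_mem _
      · exact Submodule.subset_span ⟨⟨q, hq⟩, rfl⟩
    · apply Submodule.span_mono
      rintro x ⟨q, rfl⟩
      exact ⟨q.1, rfl⟩
  have hrk : A.rank = Fintype.card S := by
    rw [Matrix.rank_eq_finrank_span_cols]
    change Module.finrank (ZMod 2) (Submodule.span (ZMod 2) (Set.range Aᵀ)) = _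
    rw [hspan, finrank_span_eq_card hli]
  rw [hrank, hrk, ← Nat.card_eq_fintype_card]
  apply Nat.card_congr
  refine ⟨fun q => ⟨q.1.1, ?_, low q, hlow q, hlowi q⟩, fun k => ⟨⟨k.1, ?_⟩, ?_⟩, ?_, ?_⟩
  · exact Fin.le_def.mpr (Nat.succ_le_succ_iff.1 q.1.2)
  · exact Nat.succ_le_succ k.2.1
  · obtain ⟨hkj, p, hp, hip⟩ := k.2
    apply Function.ne_iff.2
    exact ⟨⟨p, Nat.succ_le_succ hip⟩, hp.1⟩
  · intro q; apply Subtype.ext; apply Subtype.ext; rfl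
  · intro k; apply Subtype.ext; rfl
end

section
/- Let D be an N×N matrix over ZMod 2 and let V be an invertible upper-triangular N×N matrix over ZMod 2. Then for all indices 1 ≤ i ≤ N and 1 ≤ j ≤ N, the rank of (D·V)[≥i,≤j] equals the rank of D[≥i,≤j]. In particular, matrix reduction by left-to-right column additions preserves the ranks of all lower-left submatrices. -/
/-- Right-multiplication by an invertible upper-triangular matrix preserves the ranks of
all lower-left submatrices `D[≥ i, ≤ j]`. -/
theorem rank_lowerLeft_mul_upperTri {N : ℕ} (D V : Matrix (Fin N) (Fin N) (ZMod 2))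
    (hV : IsUnit V) (hVt : UpperTri V) :
    ∀ i j : Fin N,
      rankLL (D * V) ((i : ℕ) + 1) ((j : ℕ) + 1) = rankLL D ((i : ℕ) + 1) ((j : ℕ) + 1) := by
  intro i j
  -- diagonal entries of V are nonzero
  have hdet : IsUnit V.det := (Matrix.isUnit_iff_isUnit_det V).mp hV
  have hVtri : V.BlockTriangular id := fun a b h => hVt a b h
  have hdiag : ∀ a : Fin N, V a a ≠ 0 := by
    intro a
    have h := Matrix.det_of_upperTriangular hVtri
    rw [h] at hdet
    intro h0
    have : ∏ k : Fin N, V k k = 0 :=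
      Finset.prod_eq_zero (Finset.mem_univ a) h0
    rw [this] at hdet
    exact hdet.ne_zero rfl
  set CT := {q : Fin N // (q : ℕ) + 1 ≤ (j : ℕ) + 1}
  set RT := {p : Fin N // (i : ℕ) + 1 ≤ (p : ℕ) + 1}
  let A : Matrix RT CT (ZMod 2) := Matrix.of fun p q => D p.1 q.1
  let B : Matrix CT CT (ZMod 2) := Matrix.of fun p q => V p.1 q.1
  have hB : B.BlockTriangular id := by
    intro a b h
    exact hVt a.1 b.1 (by exact_mod_cast h)
  have h2 : ∀ x : ZMod 2, x ≠ 0 → x = 1 := by decide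
  have hBdet : IsUnit B.det := by
    rw [Matrix.det_of_upperTriangular hB]
    have hp : (∏ q : CT, B q q) = 1 :=
      Finset.prod_eq_one fun q _ => h2 _ (hdiag q.1)
    rw [hp]; exact isUnit_one
  have key : (Matrix.of fun (p : RT) (q : CT) => (D * V) p.1 q.1) = A * B := by
    ext p q
    simp only [Matrix.of_apply, Matrix.mul_apply]
    have hz : ∀ k ∈ Finset.univ (α := Fin N),
        D p.1 k * V k q.1 ≠ 0 → ((k : ℕ) + 1 ≤ (j : ℕ) + 1) := by
      intro k _ hk
      by_contra h
      push_neg at h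
      have hkq : q.1 < k := by
        have : (q.1 : ℕ) < (k : ℕ) := by
          have hqj : (q.1 : ℕ) ≤ (j : ℕ) := Nat.succ_le_succ_iff.mp q.2
          omega
        exact_mod_cast this
      exact hk (by rw [hVt k q.1 hkq, mul_zero])
    haveI : Fintype {k : Fin N // (k : ℕ) + 1 ≤ (j : ℕ) + 1} := Subtype.fintype _
    have hsub := Finset.sum_subtype (p := fun k : Fin N => (k : ℕ) + 1 ≤ (j : ℕ) + 1) (F := Subtype.fintype _)
      (Finset.univ.filter fun k : Fin N => (k : ℕ) + 1 ≤ (j : ℕ) + 1)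
      (fun x => by simp) (fun k => D p.1 k * V k q.1)
    rw [← Finset.sum_filter_of_ne hz, hsub]
    rfl
  unfold rankLL
  rw [key]
  exact Matrix.rank_mul_eq_left_of_isUnit_det B A hBdet
end

section
/- (Correctness criterion for reduction variants) Let D be an N×N matrix over ZMod 2, let V be an invertible upper-triangular N×N matrix over ZMod 2 with R = D·V reduced, and let R' be any reduced N×N matrix over ZMod 2 such that rank R'[≥i,≤j] = rank D[≥i,≤j] for all 1 ≤ i, j ≤ N. Then R' has exactly the same pivot pairs as R. In other words, any reduction procedure that preserves the ranks of all submatrices D[≥i,≤j] is a valid barcode algorithm. -/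
namespace RankAux

open Matrix Module

variable {N : ℕ}

/-- Pivots are unique per column. -/
lemma IsLow.unique_row {M : Matrix (Fin N) (Fin N) (ZMod 2)} {i i' j : Fin N}
    (h : IsLow M i j) (h' : IsLow M i' j) : i = i' :=
  le_antisymm (h'.2 i h.1) (h.2 i' h'.1)

/-- A nonzero column has a pivot. -/
lemma exists_isLow {M : Matrix (Fin N) (Fin N) (ZMod 2)} {p j : Fin N} (h : M p j ≠ 0) :
    ∃ i, IsLow M i j := by
  classical
  set s : Finset (Fin N) := Finset.univ.filter (fun i => M i j ≠ 0) with hs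
  have hne : s.Nonempty := ⟨p, by simp [hs, h]⟩
  refine ⟨s.max' hne, ?_, ?_⟩
  · have := s.max'_mem hne; simpa [hs] using this
  · intro i' hi'; exact s.le_max' i' (by simp [hs, hi'])

open Classical in
/-- Columns `j ≤ b` (1-based) whose pivot row is `≥ a` (1-based). -/
noncomputable def lowSet (M : Matrix (Fin N) (Fin N) (ZMod 2)) (a b : ℕ) : Finset (Fin N) :=
  Finset.univ.filter (fun j => (j : ℕ) + 1 ≤ b ∧ ∃ i : Fin N, a ≤ (i : ℕ) + 1 ∧ IsLow M i j)

lemma mem_lowSet {M : Matrix (Fin N) (Fin N) (ZMod 2)} {a b : ℕ} {j : Fin N} :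
    j ∈ lowSet M a b ↔ (j : ℕ) + 1 ≤ b ∧ ∃ i : Fin N, a ≤ (i : ℕ) + 1 ∧ IsLow M i j := by
  classical simp [lowSet]

lemma lowSet_anti {M : Matrix (Fin N) (Fin N) (ZMod 2)} {a a' b : ℕ} (h : a ≤ a') :
    lowSet M a' b ⊆ lowSet M a b := by
  intro j hj
  rw [mem_lowSet] at hj ⊢
  obtain ⟨hb, i, hi, hl⟩ := hj
  exact ⟨hb, i, le_trans h hi, hl⟩

/-- Vectors with distinct, maximal nonzero coordinates are linearly independent. -/
lemma linearIndependent_of_pivots {ι α : Type*} [Fintype ι] [LinearOrder α]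
    (v : ι → α → ZMod 2) (lw : ι → α) (h0 : ∀ i, v i (lw i) ≠ 0)
    (hlt : ∀ i x, lw i < x → v i x = 0) (hinj : Function.Injective lw) :
    LinearIndependent (ZMod 2) v := by
  classical
  rw [Fintype.linearIndependent_iff]
  intro g hg
  by_contra hc
  push_neg at hc
  obtain ⟨i₀, hi₀⟩ := hc
  set s : Finset ι := Finset.univ.filter (fun i => g i ≠ 0) with hs
  have hne : s.Nonempty := ⟨i₀, by simp [hs, hi₀]⟩
  obtain ⟨m, hm, hmax⟩ := Finset.exists_max_image s lw hne
  have hgm : g m ≠ 0 := by simpa [hs] using hm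
  have happ : (∑ i, g i • v i) (lw m) = 0 := by rw [hg]; rfl
  rw [Finset.sum_apply] at happ
  have hsingle : ∑ i : ι, (g i • v i) (lw m) = g m * v m (lw m) := by
    rw [Finset.sum_eq_single m]
    · simp
    · intro b _ hbm
      by_cases hgb : g b = 0
      · simp [hgb]
      · have hbs : b ∈ s := by simp [hs, hgb]
        have hle : lw b ≤ lw m := hmax b hbs
        have hne' : lw b ≠ lw m := fun h => hbm (hinj h)
        have : v b (lw m) = 0 := hlt b (lw m) (lt_of_le_of_ne hle hne')
        simp [this]
    · intro hm'; exact absurd (Finset.mem_univ m) hm'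
  rw [hsingle] at happ
  exact mul_ne_zero hgm (h0 m) happ

/-- For a reduced matrix, the rank of the lower-left submatrix counts the pivots in the box. -/
lemma rankLL_eq_card_lowSet {M : Matrix (Fin N) (Fin N) (ZMod 2)}
    (hM : IsReducedMat M) (a b : ℕ) :
    rankLL M a b = (lowSet M a b).card := by
  classical
  set A : Matrix {p : Fin N // a ≤ (p : ℕ) + 1} {q : Fin N // (q : ℕ) + 1 ≤ b} (ZMod 2) :=
    Matrix.of fun p q => M p.1 q.1 with hA
  set v : {j : Fin N // j ∈ lowSet M a b} → ({p : Fin N // a ≤ (p : ℕ) + 1} → ZMod 2) :=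
    fun j p => M p.1 j.1 with hv
  have hex : ∀ j : {j : Fin N // j ∈ lowSet M a b},
      ∃ i : Fin N, a ≤ (i : ℕ) + 1 ∧ IsLow M i j.1 := fun j => (mem_lowSet.mp j.2).2
  choose lw hlw1 hlw2 using hex
  have hli : LinearIndependent (ZMod 2) v := by
    apply linearIndependent_of_pivots v (fun j => (⟨lw j, hlw1 j⟩ : {p : Fin N // a ≤ (p : ℕ) + 1}))
    · intro j; exact (hlw2 j).1
    · intro j x hx
      by_contra hne
      have := (hlw2 j).2 x.1 hne
      exact absurd this (not_le.mpr (by exact_mod_cast hx))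
    · intro j j' h
      have : lw j = lw j' := congrArg Subtype.val h
      have hj : j.1 = j'.1 := hM (lw j) j.1 j'.1 (hlw2 j) (this ▸ (hlw2 j'))
      exact Subtype.ext hj
  have hspan : Submodule.span (ZMod 2) (Set.range Aᵀ) = Submodule.span (ZMod 2) (Set.range v) := by
    apply le_antisymm
    · rw [Submodule.span_le]
      rintro _ ⟨q, rfl⟩
      by_cases hq : q.1 ∈ lowSet M a b
      · exact Submodule.subset_span ⟨⟨q.1, hq⟩, rfl⟩
      · have hz : Aᵀ q = 0 := by
          funext p
          by_contra hpq
          have hpq' : M p.1 q.1 ≠ 0 := hpq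
          obtain ⟨i0, hlow⟩ := exists_isLow hpq'
          have hnq : ¬((q.1 : ℕ) + 1 ≤ b ∧ ∃ i : Fin N, a ≤ (i : ℕ) + 1 ∧ IsLow M i q.1) :=
            fun h => hq (mem_lowSet.mpr h)
          push_neg at hnq
          have hia : ¬ (a ≤ (i0 : ℕ) + 1) := by
            intro hcon
            exact absurd hlow (hnq q.2 i0 hcon)
          have hple : p.1 ≤ i0 := hlow.2 p.1 hpq'
          have h1 : (p.1 : ℕ) ≤ (i0 : ℕ) := hple
          have h2 : a ≤ (p.1 : ℕ) + 1 := p.2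
          omega
        rw [hz]
        exact Submodule.zero_mem _
    · rw [Submodule.span_le]
      rintro _ ⟨j, rfl⟩
      have hb : (j.1 : ℕ) + 1 ≤ b := (mem_lowSet.mp j.2).1
      exact Submodule.subset_span ⟨⟨j.1, hb⟩, rfl⟩
  calc rankLL M a b = finrank (ZMod 2) (Submodule.span (ZMod 2) (Set.range Aᵀ)) := by
        rw [rankLL, ← hA, Matrix.rank_eq_finrank_span_cols]; rfl
    _ = finrank (ZMod 2) (Submodule.span (ZMod 2) (Set.range v)) := by rw [hspan]
    _ = Fintype.card {j : Fin N // j ∈ lowSet M a b} := finrank_span_eq_card hli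
    _ = (lowSet M a b).card := Fintype.card_coe _

/-- Right multiplication by an invertible upper-triangular matrix preserves all lower-left
submatrix ranks. -/
lemma rankLL_mul_upperTri (D V : Matrix (Fin N) (Fin N) (ZMod 2))
    (hV : IsUnit V) (hVt : UpperTri V) (a b : ℕ) :
    rankLL (D * V) a b = rankLL D a b := by
  classical
  set A : Matrix {p : Fin N // a ≤ (p : ℕ) + 1} {q : Fin N // (q : ℕ) + 1 ≤ b} (ZMod 2) :=
    Matrix.of fun p q => D p.1 q.1 with hA
  set W : Matrix {q : Fin N // (q : ℕ) + 1 ≤ b} {q : Fin N // (q : ℕ) + 1 ≤ b} (ZMod 2) :=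
    Matrix.of fun q' q => V q'.1 q.1 with hW
  have hdetV : IsUnit V.det := (Matrix.isUnit_iff_isUnit_det V).mp hV
  have hVtri : V.BlockTriangular id := fun i j h => hVt i j h
  have hdiag : ∀ k : Fin N, V k k ≠ 0 := by
    have h1 : V.det = ∏ k, V k k := Matrix.det_of_upperTriangular hVtri
    have h2 : (∏ k, V k k) ≠ 0 := by rw [← h1]; exact hdetV.ne_zero
    intro k hk
    exact h2 (Finset.prod_eq_zero (Finset.mem_univ k) hk)
  have hWtri : W.BlockTriangular id := by
    intro q' q h
    have : (q.1 : Fin N) < q'.1 := by exact_mod_cast h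
    exact hVt q'.1 q.1 this
  have hdetW : IsUnit W.det := by
    rw [Matrix.det_of_upperTriangular hWtri]
    rw [isUnit_iff_ne_zero, Finset.prod_ne_zero_iff]
    intro q _
    exact hdiag q.1
  have hprod : (Matrix.of fun (p : {p : Fin N // a ≤ (p : ℕ) + 1})
      (q : {q : Fin N // (q : ℕ) + 1 ≤ b}) => (D * V) p.1 q.1) = A * W := by
    ext p q
    show (D * V) p.1 q.1 = ∑ q' : {q : Fin N // (q : ℕ) + 1 ≤ b}, D p.1 q'.1 * V q'.1 q.1
    rw [Matrix.mul_apply]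
    rw [← Finset.sum_subtype (Finset.univ.filter (fun k : Fin N => (k : ℕ) + 1 ≤ b))
      (fun k => by simp) (fun k => D p.1 k * V k q.1)]
    rw [Finset.sum_filter_of_ne]
    intro k _ hk
    by_contra hkb
    have hqk : q.1 < k := by
      have := q.2
      rw [Fin.lt_def]
      omega
    exact hk (by rw [hVt k q.1 hqk, mul_zero])
  rw [rankLL, hprod, Matrix.rank_mul_eq_left_of_isUnit_det W A hdetW, rankLL, ← hA]

lemma rankLL_rows_empty (M : Matrix (Fin N) (Fin N) (ZMod 2)) {a : ℕ} (b : ℕ) (ha : N < a) :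
    rankLL M a b = 0 := by
  have : IsEmpty {p : Fin N // a ≤ (p : ℕ) + 1} :=
    ⟨fun p => by have := p.1.isLt; have := p.2; omega⟩
  exact Nat.le_zero.mp ((Matrix.rank_le_card_height _).trans_eq (by simp))

lemma rankLL_cols_empty (M : Matrix (Fin N) (Fin N) (ZMod 2)) (a : ℕ) :
    rankLL M a 0 = 0 := by
  have : IsEmpty {q : Fin N // (q : ℕ) + 1 ≤ 0} := ⟨fun q => by have := q.2; omega⟩
  exact Nat.le_zero.mp ((Matrix.rank_le_card_width _).trans_eq (by simp))

lemma lowSet_sdiff (M : Matrix (Fin N) (Fin N) (ZMod 2)) (i : Fin N) (b : ℕ) (j' : Fin N) :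
    (j' ∈ lowSet M ((i : ℕ) + 1) b ∧ j' ∉ lowSet M ((i : ℕ) + 2) b) ↔
      ((j' : ℕ) + 1 ≤ b ∧ IsLow M i j') := by
  constructor
  · rintro ⟨h2, h1⟩
    rw [mem_lowSet] at h2 h1
    obtain ⟨hb, i', hi', hlow⟩ := h2
    refine ⟨hb, ?_⟩
    have hii' : i = i' := by
      by_contra hne
      have hlt : (i : ℕ) < (i' : ℕ) := by
        rcases lt_or_eq_of_le (show (i : ℕ) ≤ (i' : ℕ) by omega) with h | h
        · exact h
        · exact absurd (Fin.ext h) hne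
      exact h1 ⟨hb, i', by omega, hlow⟩
    rwa [hii']
  · rintro ⟨hb, hlow⟩
    refine ⟨mem_lowSet.mpr ⟨hb, i, le_refl _, hlow⟩, ?_⟩
    intro hmem
    obtain ⟨_, i'', hi'', hlow''⟩ := mem_lowSet.mp hmem
    have : i = i'' := IsLow.unique_row hlow hlow''
    subst this
    omega

lemma exists_low_iff_card {M : Matrix (Fin N) (Fin N) (ZMod 2)} (i : Fin N) (b : ℕ) :
    (∃ j' : Fin N, (j' : ℕ) + 1 ≤ b ∧ IsLow M i j') ↔
      (lowSet M ((i : ℕ) + 2) b).card ≠ (lowSet M ((i : ℕ) + 1) b).card := by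
  have hsub : lowSet M ((i : ℕ) + 2) b ⊆ lowSet M ((i : ℕ) + 1) b :=
    lowSet_anti (by omega)
  constructor
  · rintro ⟨j', hb, hlow⟩ hcard
    have heq : lowSet M ((i : ℕ) + 2) b = lowSet M ((i : ℕ) + 1) b :=
      Finset.eq_of_subset_of_card_le hsub (le_of_eq hcard.symm)
    have := (lowSet_sdiff M i b j').mpr ⟨hb, hlow⟩
    rw [← heq] at this
    exact this.2 this.1
  · intro hcard
    by_contra hne
    push_neg at hne
    apply hcard
    congr 1
    apply Finset.Subset.antisymm hsub
    intro j' hj'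
    by_contra hj'2
    have := (lowSet_sdiff M i b j').mp ⟨hj', hj'2⟩
    exact hne j' this.1 this.2

lemma isLow_iff_exists {M : Matrix (Fin N) (Fin N) (ZMod 2)} (hM : IsReducedMat M)
    (i j : Fin N) :
    IsLow M i j ↔ ((∃ j' : Fin N, (j' : ℕ) + 1 ≤ (j : ℕ) + 1 ∧ IsLow M i j') ∧
      ¬(∃ j' : Fin N, (j' : ℕ) + 1 ≤ (j : ℕ) ∧ IsLow M i j')) := by
  constructor
  · intro h
    refine ⟨⟨j, le_refl _, h⟩, ?_⟩
    rintro ⟨j', hb, h'⟩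
    have := hM i j' j h' h
    subst this
    omega
  · rintro ⟨⟨j', hb, h'⟩, hn⟩
    have hjj : (j' : ℕ) = (j : ℕ) := by
      by_contra hne
      exact hn ⟨j', by omega, h'⟩
    have : j' = j := Fin.ext hjj
    subst this
    exact h'

end RankAux

open RankAux in
/-- Correctness criterion for reduction variants: any reduced matrix `R'` that has the same
ranks of all lower-left submatrices as `D` has exactly the same pivot pairs as a matrix
`R = D * V` obtained by reducing `D` with an invertible upper-triangular `V`. -/
theorem rank_preserving_reduction_valid {N : ℕ}
    (D V R' : Matrix (Fin N) (Fin N) (ZMod 2))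
    (hV : IsUnit V) (hVt : UpperTri V) (hR : IsReducedMat (D * V))
    (hR' : IsReducedMat R')
    (hrank : ∀ i j : Fin N,
      rankLL R' ((i : ℕ) + 1) ((j : ℕ) + 1) = rankLL D ((i : ℕ) + 1) ((j : ℕ) + 1)) :
    ∀ i j : Fin N, IsLow R' i j ↔ IsLow (D * V) i j := by
  intro i j
  set R := D * V with hRdef
  have hDR : ∀ a b : ℕ, rankLL R a b = rankLL D a b := rankLL_mul_upperTri D V hV hVt
  have key : ∀ a b : ℕ, 1 ≤ a → b ≤ N → rankLL R' a b = rankLL R a b := by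
    intro a b ha hb
    rcases Nat.lt_or_ge N a with h | h
    · rw [rankLL_rows_empty _ _ h, rankLL_rows_empty _ _ h]
    · rcases Nat.eq_zero_or_pos b with hb0 | hb1
      · subst hb0
        rw [rankLL_cols_empty, rankLL_cols_empty]
      · have hi : a - 1 < N := by omega
        have hj : b - 1 < N := by omega
        have h1 := hrank ⟨a - 1, hi⟩ ⟨b - 1, hj⟩
        have ea : ((⟨a - 1, hi⟩ : Fin N) : ℕ) + 1 = a := by simp; omega
        have eb : ((⟨b - 1, hj⟩ : Fin N) : ℕ) + 1 = b := by simp; omega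
        rw [ea, eb] at h1
        rw [h1, hDR]
  have hcard : ∀ a b : ℕ, 1 ≤ a → b ≤ N →
      (lowSet R' a b).card = (lowSet R a b).card := by
    intro a b ha hb
    rw [← rankLL_eq_card_lowSet hR', ← rankLL_eq_card_lowSet hR]
    exact key a b ha hb
  have hjN : (j : ℕ) + 1 ≤ N := j.isLt
  have hjN' : (j : ℕ) ≤ N := le_of_lt j.isLt
  have c1 := hcard ((i : ℕ) + 2) ((j : ℕ) + 1) (by omega) hjN
  have c2 := hcard ((i : ℕ) + 1) ((j : ℕ) + 1) (by omega) hjN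
  have c3 := hcard ((i : ℕ) + 2) (j : ℕ) (by omega) hjN'
  have c4 := hcard ((i : ℕ) + 1) (j : ℕ) (by omega) hjN'
  rw [isLow_iff_exists hR' i j, isLow_iff_exists hR i j,
    exists_low_iff_card i ((j : ℕ) + 1), exists_low_iff_card i ((j : ℕ) + 1),
    exists_low_iff_card i (j : ℕ), exists_low_iff_card i (j : ℕ), c1, c2, c3, c4]
end

section
/- (Correctness of the swap reduction step) Let M be an N×N matrix over ZMod 2 and let j' < j be column indices such that M_{j'} and M_j are nonzero with low(M_{j'}) = low(M_j), and such that the nonzero columns among M_1, …, M_{j−1} have pairwise distinct pivots. Let M' be the matrix obtained from M by swapping columns j' and j. Then for all 1 ≤ i ≤ N and 1 ≤ m ≤ N, rank M'[≥i,≤m] = rank M[≥i,≤m]. -/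
open Matrix


section Aux

variable {ρ : Type*} [Fintype ρ] [LinearOrder ρ] {F : Type*} [Field F] [DecidableEq F]

/-- The largest index of a nonzero entry of a nonzero vector. -/
noncomputable def pivotOf (v : ρ → F) (hv : v ≠ 0) : ρ :=
  (Finset.univ.filter fun r => v r ≠ 0).max' (by
    obtain ⟨r, hr⟩ := Function.ne_iff.mp hv
    exact ⟨r, by simpa using hr⟩)

lemma pivotOf_ne (v : ρ → F) (hv : v ≠ 0) : v (pivotOf v hv) ≠ 0 := by
  have h : pivotOf v hv ∈ Finset.univ.filter fun r => v r ≠ 0 := Finset.max'_mem _ _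
  exact (Finset.mem_filter.mp h).2

lemma le_pivotOf (v : ρ → F) (hv : v ≠ 0) {r : ρ} (hr : v r ≠ 0) : r ≤ pivotOf v hv :=
  Finset.le_max' _ _ (Finset.mem_filter.mpr ⟨Finset.mem_univ r, hr⟩)

lemma pivotOf_lt_eq_zero (v : ρ → F) (hv : v ≠ 0) {r : ρ} (hr : pivotOf v hv < r) :
    v r = 0 := by
  by_contra h
  exact absurd (le_pivotOf v hv h) (not_le.mpr hr)

/-- Nonzero vectors with pairwise distinct pivots are linearly independent. -/
lemma linearIndependent_of_pivots {ι : Type*} (v : ι → ρ → F) (hv : ∀ k, v k ≠ 0)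
    (hinj : ∀ k l, pivotOf (v k) (hv k) = pivotOf (v l) (hv l) → k = l) :
    LinearIndependent F v := by
  rw [linearIndependent_iff']
  intro s g hsum k hk
  by_contra hgk
  classical
  set t := s.filter fun l => g l ≠ 0 with ht
  have htne : t.Nonempty := ⟨k, by simp [ht, hk, hgk]⟩
  obtain ⟨l, hl, hmax⟩ := t.exists_max_image (fun l => pivotOf (v l) (hv l)) htne
  have hls : l ∈ s := (Finset.mem_filter.mp hl).1
  have hgl : g l ≠ 0 := (Finset.mem_filter.mp hl).2
  set r0 := pivotOf (v l) (hv l) with hr0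
  have h0 : (∑ x ∈ s, g x • v x) r0 = 0 := by rw [hsum]; rfl
  rw [Finset.sum_apply] at h0
  have hsingle : ∑ x ∈ s, (g x • v x) r0 = g l * v l r0 := by
    refine Finset.sum_eq_single l (fun b hb hbl => ?_) (fun h => absurd hls h)
    by_cases hgb : g b = 0
    · simp [hgb]
    · have hbt : b ∈ t := Finset.mem_filter.mpr ⟨hb, hgb⟩
      have hle := hmax b hbt
      have hne : pivotOf (v b) (hv b) ≠ r0 := fun h => hbl (hinj b l h)
      have hz : v b r0 = 0 := pivotOf_lt_eq_zero (v b) (hv b) (lt_of_le_of_ne hle hne)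
      simp [hz]
  rw [hsingle] at h0
  exact (mul_ne_zero hgl (pivotOf_ne (v l) (hv l))) h0

open Classical in
/-- The rank of a matrix whose nonzero columns have pairwise distinct pivots is
the number of nonzero columns. -/
lemma rank_eq_card_pivots {ι : Type*} [Fintype ι] (A : Matrix ρ ι F)
    (hinj : ∀ k l (hk : Aᵀ k ≠ 0) (hl : Aᵀ l ≠ 0),
      pivotOf (Aᵀ k) hk = pivotOf (Aᵀ l) hl → k = l) :
    A.rank = Fintype.card {k // Aᵀ k ≠ 0} := by
  rw [Matrix.rank_eq_finrank_span_cols]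
  change Module.finrank F (Submodule.span F (Set.range Aᵀ)) = _
  have hspan : Submodule.span F (Set.range Aᵀ) =
      Submodule.span F (Set.range fun k : {k // Aᵀ k ≠ 0} => Aᵀ k.1) := by
    apply le_antisymm <;> rw [Submodule.span_le]
    · rintro _ ⟨k, rfl⟩
      by_cases h : Aᵀ k = 0
      · rw [h]; exact Submodule.zero_mem _
      · exact Submodule.subset_span ⟨⟨k, h⟩, rfl⟩
    · rintro _ ⟨k, rfl⟩
      exact Submodule.subset_span ⟨k.1, rfl⟩
  rw [hspan]
  exact finrank_span_eq_card (linearIndependent_of_pivots _ (fun k => k.2)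
    (fun k l h => Subtype.ext (hinj k.1 l.1 k.2 l.2 h)))

end Aux

/-- Correctness of the swap reduction step: if columns `j' < j` are nonzero with the same
pivot and the nonzero columns strictly before `j` have pairwise distinct pivots, then
swapping columns `j'` and `j` preserves the ranks of all lower-left submatrices. -/
theorem swap_step_preserves_rank {N : ℕ} (M : Matrix (Fin N) (Fin N) (ZMod 2))
    (j' j : Fin N) (hjj : j' < j) (p : Fin N)
    (hpj' : IsLow M p j') (hpj : IsLow M p j)
    (hred : ∀ (i : Fin N) (a b : Fin N), a < j → b < j → IsLow M i a → IsLow M i b → a = b) :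
    ∀ i m : Fin N,
      rankLL (M.submatrix id (Equiv.swap j' j)) ((i : ℕ) + 1) ((m : ℕ) + 1) =
        rankLL M ((i : ℕ) + 1) ((m : ℕ) + 1) := by
  classical
  intro i m
  have hj'j : (j' : ℕ) < (j : ℕ) := hjj
  by_cases hmj' : (m : ℕ) < (j' : ℕ)
  · -- both swapped columns are outside the column range: the matrices coincide
    unfold rankLL
    congr 1
    ext r q
    have hq : (q.1 : ℕ) ≤ (m : ℕ) := by have := q.2; omega
    have h1 : q.1 ≠ j' := by intro h; rw [h] at hq; omega
    have h2 : q.1 ≠ j := by intro h; rw [h] at hq; omega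
    simp [Matrix.submatrix_apply, Equiv.swap_apply_of_ne_of_ne h1 h2]
  · by_cases hmj : (m : ℕ) < (j : ℕ)
    · -- the interesting case : j' ≤ m < j
      unfold rankLL
      set A := (Matrix.of fun (r : {p : Fin N // (i : ℕ) + 1 ≤ (p : ℕ) + 1})
          (q : {q : Fin N // (q : ℕ) + 1 ≤ (m : ℕ) + 1}) =>
          (M.submatrix id ⇑(Equiv.swap j' j)) r.1 q.1) with hA
      set B := (Matrix.of fun (r : {p : Fin N // (i : ℕ) + 1 ≤ (p : ℕ) + 1})
          (q : {q : Fin N // (q : ℕ) + 1 ≤ (m : ℕ) + 1}) => M r.1 q.1) with hB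
      have hltj : ∀ q : {q : Fin N // (q : ℕ) + 1 ≤ (m : ℕ) + 1}, q.1 < j := by
        intro q; rw [Fin.lt_def]; have := q.2; omega
      have hswap : ∀ q : {q : Fin N // (q : ℕ) + 1 ≤ (m : ℕ) + 1},
          (q.1 = j' ∧ (Equiv.swap j' j) q.1 = j) ∨
            (q.1 ≠ j' ∧ (Equiv.swap j' j) q.1 = q.1) := by
        intro q
        rcases eq_or_ne q.1 j' with h | h
        · exact Or.inl ⟨h, by rw [h, Equiv.swap_apply_left]⟩
        · exact Or.inr ⟨h, Equiv.swap_apply_of_ne_of_ne h (Fin.ne_of_lt (hltj q))⟩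
      -- the pivot of a nonzero restricted column is the low of the full column
      have key : ∀ (c : Fin N) (v : {p : Fin N // (i : ℕ) + 1 ≤ (p : ℕ) + 1} → ZMod 2)
          (hvc : ∀ r, v r = M r.1 c) (hv : v ≠ 0), IsLow M (pivotOf v hv).1 c := by
        intro c v hvc hv
        constructor
        · rw [← hvc]; exact pivotOf_ne v hv
        · intro i' hi'
          by_cases hcase : (i : ℕ) + 1 ≤ (i' : ℕ) + 1
          · have hle := le_pivotOf v hv (r := ⟨i', hcase⟩) (by rw [hvc]; exact hi')
            exact Subtype.coe_le_coe.mpr hle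
          · have h1 : (i : ℕ) + 1 ≤ ((pivotOf v hv).1 : ℕ) + 1 := (pivotOf v hv).2
            rw [Fin.le_def]
            omega
      have hBinj : ∀ k l (hk : Bᵀ k ≠ 0) (hl : Bᵀ l ≠ 0),
          pivotOf (Bᵀ k) hk = pivotOf (Bᵀ l) hl → k = l := by
        intro k l hk hl h
        have Lk := key k.1 (Bᵀ k) (fun r => rfl) hk
        have Ll := key l.1 (Bᵀ l) (fun r => rfl) hl
        rw [h] at Lk
        exact Subtype.ext (hred _ _ _ (hltj k) (hltj l) Lk Ll)
      have hjp : ∀ r : Fin N, IsLow M r j → r = p := fun r hr =>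
        le_antisymm (hpj.2 r hr.1) (hr.2 p hpj.1)
      have hAinj : ∀ k l (hk : Aᵀ k ≠ 0) (hl : Aᵀ l ≠ 0),
          pivotOf (Aᵀ k) hk = pivotOf (Aᵀ l) hl → k = l := by
        intro k l hk hl h
        have Lk := key ((Equiv.swap j' j) k.1) (Aᵀ k) (fun r => rfl) hk
        have Ll := key ((Equiv.swap j' j) l.1) (Aᵀ l) (fun r => rfl) hl
        rw [h] at Lk
        rcases hswap k with ⟨hk1, hk2⟩ | ⟨hk1, hk2⟩ <;>
          rcases hswap l with ⟨hl1, hl2⟩ | ⟨hl1, hl2⟩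
        · exact Subtype.ext (hk1.trans hl1.symm)
        · rw [hk2] at Lk; rw [hl2] at Ll
          rw [hjp _ Lk] at Ll
          exact absurd (hred p l.1 j' (hltj l) hjj Ll hpj') hl1
        · rw [hl2] at Ll; rw [hk2] at Lk
          rw [hjp _ Ll] at Lk
          exact absurd (hred p k.1 j' (hltj k) hjj Lk hpj') hk1
        · rw [hk2] at Lk; rw [hl2] at Ll
          exact Subtype.ext (hred _ _ _ (hltj k) (hltj l) Lk Ll)
      -- a restricted column with low `p` is nonzero iff the pivot row is in range
      have colne : ∀ c : Fin N, IsLow M p c →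
          ((fun r : {p : Fin N // (i : ℕ) + 1 ≤ (p : ℕ) + 1} => M r.1 c) ≠ 0 ↔
            (i : ℕ) ≤ (p : ℕ)) := by
        intro c hc
        constructor
        · intro h
          obtain ⟨r, hr⟩ := Function.ne_iff.mp h
          have hr' : M r.1 c ≠ 0 := by simpa using hr
          have h1 : (r.1 : ℕ) ≤ (p : ℕ) := Fin.le_def.mp (hc.2 r.1 hr')
          have h2 := r.2
          omega
        · intro h
          refine Function.ne_iff.mpr ⟨⟨p, Nat.succ_le_succ h⟩, ?_⟩
          simpa using hc.1
      rw [rank_eq_card_pivots A hAinj, rank_eq_card_pivots B hBinj]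
      refine Fintype.card_congr (Equiv.subtypeEquivRight ?_)
      intro q
      rcases hswap q with ⟨hq1, hq2⟩ | ⟨hq1, hq2⟩
      · have e1 : Aᵀ q = fun r => M r.1 j := by
          funext r; show M r.1 _ = _; rw [hq2]
        have e2 : Bᵀ q = fun r => M r.1 j' := by
          funext r; show M r.1 q.1 = _; rw [hq1]
        rw [e1, e2, colne j hpj, colne j' hpj']
      · have e1 : Aᵀ q = Bᵀ q := by
          funext r; show M r.1 _ = M r.1 q.1; rw [hq2]
        rw [e1]
    · -- m ≥ j : the columns are permuted by the swap, so the rank is unchanged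
      have hjm : (j : ℕ) ≤ (m : ℕ) := not_lt.mp hmj
      have hSle : ∀ q : Fin N, (q : ℕ) ≤ (m : ℕ) →
          (((Equiv.swap j' j) q : Fin N) : ℕ) ≤ (m : ℕ) := by
        intro q hq
        rcases eq_or_ne q j' with rfl | h1
        · rw [Equiv.swap_apply_left]; omega
        rcases eq_or_ne q j with rfl | h2
        · rw [Equiv.swap_apply_right]; omega
        · rw [Equiv.swap_apply_of_ne_of_ne h1 h2]; exact hq
      have hiff : ∀ q : Fin N, ((q : ℕ) + 1 ≤ (m : ℕ) + 1) ↔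
          ((((Equiv.swap j' j) q : Fin N) : ℕ) + 1 ≤ (m : ℕ) + 1) := by
        intro q
        constructor
        · intro h
          exact Nat.succ_le_succ (hSle q (Nat.succ_le_succ_iff.mp h))
        · intro h
          have h2 := hSle _ (Nat.succ_le_succ_iff.mp h)
          rw [Equiv.swap_apply_self] at h2
          exact Nat.succ_le_succ h2
      let eswap : {q : Fin N // (q : ℕ) + 1 ≤ (m : ℕ) + 1} ≃
          {q : Fin N // (q : ℕ) + 1 ≤ (m : ℕ) + 1} := (Equiv.swap j' j).subtypeEquiv hiff
      unfold rankLL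
      have heq : (Matrix.of fun (r : {p : Fin N // (i : ℕ) + 1 ≤ (p : ℕ) + 1})
          (q : {q : Fin N // (q : ℕ) + 1 ≤ (m : ℕ) + 1}) =>
            (M.submatrix id ⇑(Equiv.swap j' j)) r.1 q.1) =
          (Matrix.of fun (r : {p : Fin N // (i : ℕ) + 1 ≤ (p : ℕ) + 1})
          (q : {q : Fin N // (q : ℕ) + 1 ≤ (m : ℕ) + 1}) => M r.1 q.1).submatrix
            ⇑(Equiv.refl _) ⇑eswap := by
        ext r q
        simp [eswap, Matrix.submatrix_apply, Equiv.subtypeEquiv]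
      have htr : (((Matrix.of fun (r : {p : Fin N // (i : ℕ) + 1 ≤ (p : ℕ) + 1})
          (q : {q : Fin N // (q : ℕ) + 1 ≤ (m : ℕ) + 1}) => M r.1 q.1).submatrix
            ⇑(Equiv.refl _) ⇑eswap)).col =
          ((Matrix.of fun (r : {p : Fin N // (i : ℕ) + 1 ≤ (p : ℕ) + 1})
          (q : {q : Fin N // (q : ℕ) + 1 ≤ (m : ℕ) + 1}) => M r.1 q.1)).col ∘ ⇑eswap := by
        funext q r
        rfl
      rw [heq, Matrix.rank_eq_finrank_span_cols, Matrix.rank_eq_finrank_span_cols, htr,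
        Function.Surjective.range_comp eswap.surjective]
end

section
/- (Correctness of the right-to-left additions in the retrospective reduction) Let M be a reduced N×N matrix over ZMod 2 and let k < ℓ be column indices with M_k and M_ℓ nonzero and low(M_ℓ) < low(M_k). Let M' be the matrix obtained from M by replacing column k with M_k + M_ℓ (leaving all other columns unchanged). Then M' is reduced, low(M'_k) = low(M_k), and for all 1 ≤ i ≤ N and 1 ≤ m ≤ N, rank M'[≥i,≤m] = rank M[≥i,≤m]. -/
/-- Pivots are unique within a column. -/
lemma isLow_unique {N : ℕ} {M : Matrix (Fin N) (Fin N) (ZMod 2)} {i i' j : Fin N}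
    (h : IsLow M i j) (h' : IsLow M i' j) : i = i' :=
  le_antisymm (h'.2 i h.1) (h.2 i' h'.1)

/-- A family of vectors with distinct "pivots" is linearly independent. -/
lemma linearIndependent_of_pivots_s8 {ι ρ : Type*} [LinearOrder ρ]
    (v : ι → ρ → ZMod 2) (piv : ι → ρ) (hinj : Function.Injective piv)
    (h1 : ∀ j, v j (piv j) ≠ 0) (h2 : ∀ j r, v j r ≠ 0 → r ≤ piv j) :
    LinearIndependent (ZMod 2) v := by
  classical
  rw [linearIndependent_iff']
  intro s
  induction s using Finset.strongInduction with
  | _ s ih =>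
    intro g hsum j hj
    obtain ⟨j0, hj0s, hmax⟩ := s.exists_max_image piv ⟨j, hj⟩
    have hval : ∑ i ∈ s, g i * v i (piv j0) = 0 := by
      have := congrFun hsum (piv j0)
      simpa [Finset.sum_apply] using this
    have hg0 : g j0 = 0 := by
      rw [Finset.sum_eq_single j0] at hval
      · rcases mul_eq_zero.mp hval with h | h
        · exact h
        · exact absurd h (h1 j0)
      · intro i his hine
        have hvz : v i (piv j0) = 0 := by
          by_contra hvnz
          have h3 := h2 i (piv j0) hvnz
          have h4 := hmax i his
          exact hine (hinj (le_antisymm h4 h3))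
        rw [hvz, mul_zero]
      · intro h; exact absurd hj0s h
    by_cases hjj : j = j0
    · rw [hjj]; exact hg0
    · refine ih (s.erase j0) (Finset.erase_ssubset hj0s) g ?_ j
        (Finset.mem_erase.mpr ⟨hjj, hj⟩)
      have hsep := Finset.add_sum_erase s (fun i => g i • v i) hj0s
      rw [hsum] at hsep
      simp only [hg0, zero_smul, zero_add] at hsep
      exact hsep

open scoped Classical

/-- Pairing lemma: the rank of a lower-left submatrix of a reduced matrix equals the
number of columns `≤ b` whose pivot lies in a row `≥ a`. -/
lemma rankLL_eq_card {N : ℕ} (A : Matrix (Fin N) (Fin N) (ZMod 2)) (hA : IsReducedMat A)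
    (a b : ℕ) :
    rankLL A a b = Fintype.card
      {j : Fin N // ((j : ℕ) + 1 ≤ b) ∧ ∃ i : Fin N, a ≤ (i : ℕ) + 1 ∧ IsLow A i j} := by
  classical
  set R := {p : Fin N // a ≤ (p : ℕ) + 1}
  set C := {q : Fin N // (q : ℕ) + 1 ≤ b}
  set c : C → R → ZMod 2 := fun q p => A p.1 q.1 with hc
  have hex : ∀ q : C, (∃ p : R, A p.1 q.1 ≠ 0) →
      ∃ i : Fin N, a ≤ (i : ℕ) + 1 ∧ IsLow A i q.1 := by
    rintro q ⟨p, hp⟩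
    obtain ⟨i, hi, hmaxi⟩ := (Finset.univ.filter (fun i => A i q.1 ≠ 0)).exists_max_image
      (fun i => i) ⟨p.1, Finset.mem_filter.mpr ⟨Finset.mem_univ _, hp⟩⟩
    have hine : A i q.1 ≠ 0 := (Finset.mem_filter.mp hi).2
    have hmax' : ∀ i' : Fin N, A i' q.1 ≠ 0 → i' ≤ i := fun i' h =>
      hmaxi i' (Finset.mem_filter.mpr ⟨Finset.mem_univ _, h⟩)
    refine ⟨i, ?_, hine, hmax'⟩
    have h5 : (p.1 : ℕ) ≤ (i : ℕ) := hmax' p.1 hp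
    have h6 := p.2
    omega
  set T := {q : C // ∃ i : Fin N, a ≤ (i : ℕ) + 1 ∧ IsLow A i q.1} with hT
  have hspan : Submodule.span (ZMod 2) (Set.range c)
      = Submodule.span (ZMod 2) (Set.range fun t : T => c t.1) := by
    apply le_antisymm
    · rw [Submodule.span_le]
      rintro _ ⟨q, rfl⟩
      by_cases hq : ∃ i : Fin N, a ≤ (i : ℕ) + 1 ∧ IsLow A i q.1
      · exact Submodule.subset_span ⟨⟨q, hq⟩, rfl⟩
      · have hz : c q = 0 := by
          funext p
          by_contra hp
          exact hq (hex q ⟨p, hp⟩)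
        rw [hz]
        exact Submodule.zero_mem _
    · exact Submodule.span_mono (by rintro _ ⟨t, rfl⟩; exact ⟨t.1, rfl⟩)
  have hli : LinearIndependent (ZMod 2) (fun t : T => c t.1) := by
    refine linearIndependent_of_pivots_s8 _
      (fun t => (⟨t.2.choose, t.2.choose_spec.1⟩ : R)) ?_ ?_ ?_
    · intro t t' h
      have h1 : t.2.choose = t'.2.choose := congrArg Subtype.val h
      have h2' := t'.2.choose_spec.2
      rw [← h1] at h2'
      have := hA t.2.choose t.1.1 t'.1.1 t.2.choose_spec.2 h2'
      exact Subtype.ext (Subtype.ext this)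
    · intro t; exact t.2.choose_spec.2.1
    · intro t r hr
      exact Subtype.coe_le_coe.mp (t.2.choose_spec.2.2 r.1 hr)
  have hrank : rankLL A a b
      = Module.finrank (ZMod 2) (Submodule.span (ZMod 2) (Set.range c)) := by
    rw [rankLL, Matrix.rank_eq_finrank_span_cols]
    rfl
  rw [hrank, hspan, finrank_span_eq_card hli]
  exact Fintype.card_congr (Equiv.subtypeSubtypeEquivSubtypeInter
    (fun q : Fin N => (q : ℕ) + 1 ≤ b)
    (fun q : Fin N => ∃ i : Fin N, a ≤ (i : ℕ) + 1 ∧ IsLow A i q))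

/-- Correctness of the right-to-left additions of the retrospective reduction: if `M` is
reduced, `k < l`, columns `k` and `l` are nonzero and `low(M_l) < low(M_k)`, then adding
column `l` to column `k` yields a reduced matrix in which the pivot of column `k` is
unchanged and the ranks of all lower-left submatrices are preserved. -/
theorem retrospective_step_correct {N : ℕ} (M M' : Matrix (Fin N) (Fin N) (ZMod 2))
    (hM : IsReducedMat M) (k l : Fin N) (hkl : k < l)
    (ik il : Fin N) (hik : IsLow M ik k) (hil : IsLow M il l) (hlow : il < ik)
    (hM' : M' = Matrix.of fun p q => if q = k then M p k + M p l else M p q) :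
    IsReducedMat M' ∧ IsLow M' ik k ∧
      ∀ i m : Fin N,
        rankLL M' ((i : ℕ) + 1) ((m : ℕ) + 1) = rankLL M ((i : ℕ) + 1) ((m : ℕ) + 1) := by
  have hcol : ∀ p q : Fin N, q ≠ k → M' p q = M p q := by
    intro p q hq; rw [hM']; simp [hq]
  have hcolk : ∀ p : Fin N, M' p k = M p k + M p l := by
    intro p; rw [hM']; simp
  have hikl : M ik l = 0 := by
    by_contra h
    exact absurd (hil.2 ik h) (not_le.mpr hlow)
  have hik' : IsLow M' ik k := by
    constructor
    · rw [hcolk, hikl, add_zero]; exact hik.1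
    · intro i' h
      rw [hcolk] at h
      by_cases hk : M i' k ≠ 0
      · exact hik.2 i' hk
      · push_neg at hk
        rw [hk, zero_add] at h
        exact le_of_lt (lt_of_le_of_lt (hil.2 i' h) hlow)
  have hiff : ∀ i j : Fin N, IsLow M' i j ↔ IsLow M i j := by
    intro i j
    by_cases hj : j = k
    · subst hj
      constructor
      · intro h
        rw [isLow_unique h hik']
        exact hik
      · intro h
        rw [isLow_unique h hik]
        exact hik'
    · unfold IsLow
      rw [hcol _ _ hj]
      constructor
      · rintro ⟨h1, h2⟩
        exact ⟨h1, fun i' h => h2 i' (by rw [hcol _ _ hj]; exact h)⟩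
      · rintro ⟨h1, h2⟩
        exact ⟨h1, fun i' h => h2 i' (by rw [← hcol _ _ hj]; exact h)⟩
  have hred : IsReducedMat M' := by
    intro i j j' h h'
    exact hM i j j' ((hiff i j).mp h) ((hiff i j').mp h')
  refine ⟨hred, hik', fun i m => ?_⟩
  rw [rankLL_eq_card M' hred, rankLL_eq_card M hM]
  apply Fintype.card_congr
  apply Equiv.subtypeEquivRight
  intro j
  constructor
  · rintro ⟨h1, i', h2, h3⟩; exact ⟨h1, i', h2, (hiff i' j).mp h3⟩
  · rintro ⟨h1, i', h2, h3⟩; exact ⟨h1, i', h2, (hiff i' j).mpr h3⟩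
end

section
/- (Each index appears in at most one pivot pair) Let D be an N×N matrix over ZMod 2 with D·D = 0, let V be an invertible upper-triangular N×N matrix over ZMod 2, and suppose R = D·V is reduced. If i = low(R_j) for some nonzero column R_j, then the i-th column of R is zero. Consequently, no index i occurs both as the first coordinate of a pivot pair and as the second coordinate of a pivot pair of R. -/
lemma zmod2_ne_zero' : ∀ a : ZMod 2, a ≠ 0 → a = 1 := by decide
lemma zmod2_mul_ne_zero' : ∀ a b : ZMod 2, a ≠ 0 → b ≠ 0 → a * b ≠ 0 := by decide
lemma zmod2_add_eq_zero' : ∀ a b : ZMod 2, a + b = 0 → a = b := by decide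

/-- Each index appears in at most one pivot pair: if `D * D = 0` and `R = D * V` is reduced
(`V` invertible upper-triangular), then whenever `i` is the pivot of some nonzero column
`R_j`, the `i`-th column of `R` is zero; consequently `i` cannot also occur as the second
coordinate of a pivot pair. -/
theorem pivot_row_column_zero {N : ℕ} (D V : Matrix (Fin N) (Fin N) (ZMod 2))
    (hD : D * D = 0) (hV : IsUnit V) (hVt : UpperTri V) (hR : IsReducedMat (D * V)) :
    ∀ i j : Fin N, IsLow (D * V) i j →
      (∀ p : Fin N, (D * V) p i = 0) ∧ ¬ ∃ i' : Fin N, IsLow (D * V) i' i := by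
  intro i j hlow
  set R := D * V with hRdef
  have hdet : IsUnit V.det := (Matrix.isUnit_iff_isUnit_det V).mp hV
  have hBT : V.BlockTriangular id := fun a b h => hVt a b h
  haveI : Invertible V := V.invertibleOfIsUnitDet hdet
  have hinvBT : V⁻¹.BlockTriangular id :=
    Matrix.blockTriangular_inv_of_blockTriangular hBT
  -- diagonal of V is 1
  have hdiag : ∀ p : Fin N, V p p = 1 := by
    intro p
    have hprod : V.det = ∏ q, V q q := Matrix.det_of_upperTriangular hBT
    have : (∏ q, V q q) ≠ 0 := by rw [← hprod]; exact hdet.ne_zero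
    exact zmod2_ne_zero' _ (Finset.prod_ne_zero_iff.mp this p (Finset.mem_univ p))
  -- D = R * V⁻¹
  have hRV : R * V⁻¹ = D := by
    rw [hRdef, Matrix.mul_assoc, Matrix.mul_nonsing_inv _ hdet, Matrix.mul_one]
  -- D * R = 0
  have hDR : D * R = 0 := by rw [hRdef, ← Matrix.mul_assoc, hD, Matrix.zero_mul]
  -- the span of columns of R with index < i
  set W : Fin N → (Fin N → ZMod 2) :=
    fun q => if q < i then (fun x => R x q) else 0 with hW
  set S : Submodule (ZMod 2) (Fin N → ZMod 2) :=
    Submodule.span (ZMod 2) (Set.range W) with hS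
  -- columns of D with index < i lie in S
  have hDmem : ∀ p : Fin N, p < i → (fun x => D x p) ∈ S := by
    intro p hp
    have hcol : (fun x => D x p) = ∑ q, (V⁻¹ q p) • (fun x => R x q) := by
      funext x
      rw [← hRV, Matrix.mul_apply, Finset.sum_apply]
      exact Finset.sum_congr rfl fun q _ => by simp [mul_comm]
    rw [hcol]
    refine Submodule.sum_mem _ fun q _ => ?_
    by_cases hq : q < i
    · have : (fun x => R x q) = W q := by simp [hW, hq]
      rw [this]
      exact Submodule.smul_mem _ _ (Submodule.subset_span ⟨q, rfl⟩)
    · have hpq : p < q := lt_of_lt_of_le hp (not_lt.mp hq)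
      have : V⁻¹ q p = 0 := hinvBT hpq
      rw [this, zero_smul]
      exact Submodule.zero_mem _
  -- column i of D lies in S
  have hDi : (fun x => D x i) ∈ S := by
    have hsum : ∑ p, (R p j) • (fun x => D x p) = 0 := by
      funext x
      simp only [Finset.sum_apply, Pi.smul_apply, smul_eq_mul, Pi.zero_apply]
      have : (D * R) x j = 0 := by rw [hDR]; rfl
      rw [Matrix.mul_apply] at this
      rw [← this]
      exact Finset.sum_congr rfl fun p _ => mul_comm _ _
    rw [← Finset.add_sum_erase _ _ (Finset.mem_univ i)] at hsum
    have hRij : R i j = 1 := zmod2_ne_zero' _ hlow.1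
    rw [hRij, one_smul] at hsum
    have heq : (fun x => D x i) = ∑ p ∈ Finset.univ.erase i, (R p j) • (fun x => D x p) := by
      funext x
      have := congrFun hsum x
      simp only [Pi.add_apply, Pi.zero_apply] at this
      exact zmod2_add_eq_zero' _ _ this
    rw [heq]
    refine Submodule.sum_mem _ fun p hp => ?_
    by_cases hpz : R p j = 0
    · rw [hpz, zero_smul]; exact Submodule.zero_mem _
    · have hpi : p < i :=
        lt_of_le_of_ne (hlow.2 p hpz) (Finset.ne_of_mem_erase hp)
      exact Submodule.smul_mem _ _ (hDmem p hpi)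
  -- column i of R lies in S
  have hRi : (fun x => R x i) ∈ S := by
    have hcol : (fun x => R x i) = ∑ p, (V p i) • (fun x => D x p) := by
      funext x
      rw [hRdef, Matrix.mul_apply, Finset.sum_apply]
      exact Finset.sum_congr rfl fun p _ => by simp [mul_comm]
    rw [hcol]
    refine Submodule.sum_mem _ fun p _ => ?_
    rcases lt_trichotomy p i with h | h | h
    · exact Submodule.smul_mem _ _ (hDmem p h)
    · subst h; exact Submodule.smul_mem _ _ hDi
    · rw [hVt p i h, zero_smul]; exact Submodule.zero_mem _
  -- extract coefficients
  obtain ⟨c, hc⟩ := (Submodule.mem_span_range_iff_exists_fun (ZMod 2)).mp hRi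
  set c' : Fin N → ZMod 2 := fun q => if q < i then c q else 0 with hc'
  have hcc : ∀ x, R x i = ∑ q, c' q * R x q := by
    intro x
    have := congrFun hc x
    rw [Finset.sum_apply] at this
    rw [← this]
    refine Finset.sum_congr rfl fun q _ => ?_
    by_cases hq : q < i <;> simp [hW, hc', hq]
  -- main claim: column i of R is zero
  have hcol : ∀ p : Fin N, R p i = 0 := by
    by_contra h
    push_neg at h
    obtain ⟨x0, hx0⟩ := h
    classical
    set T : Finset (Fin N) :=
      Finset.univ.filter (fun x => ∃ q, c' q ≠ 0 ∧ R x q ≠ 0) with hT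
    have hx0T : x0 ∈ T := by
      have : ∑ q, c' q * R x0 q ≠ 0 := by rw [← hcc]; exact hx0
      obtain ⟨q, _, hq⟩ := Finset.exists_ne_zero_of_sum_ne_zero this
      exact Finset.mem_filter.mpr ⟨Finset.mem_univ _,
        ⟨q, left_ne_zero_of_mul hq, right_ne_zero_of_mul hq⟩⟩
    have hTne : T.Nonempty := ⟨x0, hx0T⟩
    set m : Fin N := T.max' hTne with hm
    have hbound : ∀ x q : Fin N, c' q ≠ 0 → R x q ≠ 0 → x ≤ m := by
      intro x q h1 h2
      exact Finset.le_max' T x (Finset.mem_filter.mpr ⟨Finset.mem_univ _, q, h1, h2⟩)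
    obtain ⟨-, q0, hq01, hq02⟩ := Finset.mem_filter.mp (T.max'_mem hTne)
    have hq0i : q0 < i := by
      by_contra hq
      exact hq01 (by simp [hc', hq])
    have hlow0 : IsLow R m q0 := ⟨hq02, fun x hx => hbound x q0 hq01 hx⟩
    have hRmi : R m i ≠ 0 := by
      rw [hcc m]
      have hsingle : ∑ q, c' q * R m q = c' q0 * R m q0 := by
        refine Finset.sum_eq_single q0 (fun q _ hqne => ?_) (fun h => absurd (Finset.mem_univ q0) h)
        by_contra hne
        have h1 : c' q ≠ 0 := left_ne_zero_of_mul hne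
        have h2 : R m q ≠ 0 := right_ne_zero_of_mul hne
        have : IsLow R m q := ⟨h2, fun x hx => hbound x q h1 hx⟩
        exact hqne (hR m q q0 this hlow0)
      rw [hsingle]
      exact zmod2_mul_ne_zero' _ _ hq01 hq02
    have hlowi : IsLow R m i := by
      refine ⟨hRmi, fun x hx => ?_⟩
      have : ∑ q, c' q * R x q ≠ 0 := by rw [← hcc]; exact hx
      obtain ⟨q, _, hq⟩ := Finset.exists_ne_zero_of_sum_ne_zero this
      exact hbound x q (left_ne_zero_of_mul hq) (right_ne_zero_of_mul hq)
    have : i = q0 := hR m i q0 hlowi hlow0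
    exact absurd (this ▸ hq0i) (lt_irrefl i)
  exact ⟨hcol, fun ⟨i', h⟩ => h.1 (hcol i')⟩
end

section
/- (Correctness of the clearing optimization) Let D be an N×N matrix over ZMod 2 with D·D = 0, and suppose i is a positive index of D, i.e., there exists j such that (i,j) is a pivot pair of D. Let D' be the matrix obtained from D by setting the entire i-th column to zero. Then the pivot pairs of D' coincide exactly with the pivot pairs of D. -/
/-- `(i,j)` is a pivot pair of `D`: it is a pivot pair of some reduced matrix `D * V` with
`V` invertible and upper-triangular (this does not depend on the choice of `V`). -/
def IsPivotPairOf {N : ℕ} (D : Matrix (Fin N) (Fin N) (ZMod 2)) (i j : Fin N) : Prop :=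
  ∃ V : Matrix (Fin N) (Fin N) (ZMod 2),
    IsUnit V ∧ UpperTri V ∧ IsReducedMat (D * V) ∧ IsLow (D * V) i j

lemma upperTri_iff_bt {N : ℕ} {M : Matrix (Fin N) (Fin N) (ZMod 2)} :
    UpperTri M ↔ M.BlockTriangular id :=
  ⟨fun h _ _ hlt => h _ _ hlt, fun h a b hlt => h hlt⟩

/-- Right multiplication by an invertible upper-triangular matrix preserves pivot pairs. -/
lemma pivot_mul_aux {N : ℕ} (D W : Matrix (Fin N) (Fin N) (ZMod 2))
    (hWu : IsUnit W) (hWt : UpperTri W) (a b : Fin N) :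
    IsPivotPairOf (D * W) a b ↔ IsPivotPairOf D a b := by
  have hdet : IsUnit W.det := (Matrix.isUnit_iff_isUnit_det W).mp hWu
  constructor
  · rintro ⟨V, hu, ht, hred, hlow⟩
    refine ⟨W * V, hWu.mul hu, ?_, by rwa [← mul_assoc], by rwa [← mul_assoc]⟩
    exact upperTri_iff_bt.mpr
      ((upperTri_iff_bt.mp hWt).mul (upperTri_iff_bt.mp ht))
  · rintro ⟨V, hu, ht, hred, hlow⟩
    haveI : Invertible W := W.invertibleOfIsUnitDet hdet
    have hWinv : IsUnit W⁻¹ :=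
      ⟨⟨W⁻¹, W, Matrix.nonsing_inv_mul W hdet, Matrix.mul_nonsing_inv W hdet⟩, rfl⟩
    have hkey : D * W * (W⁻¹ * V) = D * V := by
      rw [mul_assoc, ← mul_assoc W, Matrix.mul_nonsing_inv W hdet, one_mul]
    refine ⟨W⁻¹ * V, hWinv.mul hu, ?_, by rwa [hkey], by rwa [hkey]⟩
    exact upperTri_iff_bt.mpr
      ((Matrix.blockTriangular_inv_of_blockTriangular (upperTri_iff_bt.mp hWt)).mul
        (upperTri_iff_bt.mp ht))

/-- Correctness of the clearing optimization: if `D * D = 0` and `i` is a positive index of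
`D` (i.e. `(i,j)` is a pivot pair of `D` for some `j`), then setting the `i`-th column of
`D` to zero does not change the pivot pairs. -/
theorem clearing_correct {N : ℕ} (D : Matrix (Fin N) (Fin N) (ZMod 2)) (hD : D * D = 0)
    (i j : Fin N) (hpos : IsPivotPairOf D i j) :
    ∀ a b : Fin N,
      IsPivotPairOf (Matrix.of fun p q => if q = i then 0 else D p q) a b ↔
        IsPivotPairOf D a b := by
  obtain ⟨V, hVu, hVt, hVred, hVlow⟩ := hpos
  set R : Matrix (Fin N) (Fin N) (ZMod 2) := D * V with hR
  have hDR : D * R = 0 := by rw [hR, ← mul_assoc, hD, Matrix.zero_mul]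
  -- the correction matrix W : identity with column i replaced by column j of R
  set W : Matrix (Fin N) (Fin N) (ZMod 2) :=
    Matrix.of (fun p q => if q = i then R p j
      else (1 : Matrix (Fin N) (Fin N) (ZMod 2)) p q) with hWdef
  have hone : ∀ x : ZMod 2, x ≠ 0 → x = 1 := by decide
  have hWt : UpperTri W := by
    intro p q hlt
    simp only [hWdef, Matrix.of_apply]
    split_ifs with h
    · by_contra hne
      exact absurd (hVlow.2 p hne) (not_le.mpr (h ▸ hlt))
    · exact Matrix.one_apply_ne (ne_of_gt hlt)
  have hWdiag : ∀ k : Fin N, W k k = 1 := by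
    intro k
    simp only [hWdef, Matrix.of_apply]
    split_ifs with h
    · exact hone _ (h ▸ hVlow.1)
    · exact Matrix.one_apply_eq k
  have hWu : IsUnit W := by
    rw [Matrix.isUnit_iff_isUnit_det,
      Matrix.det_of_upperTriangular (upperTri_iff_bt.mp hWt)]
    simp [hWdiag]
  have hDW : (Matrix.of fun p q => if q = i then 0 else D p q : Matrix (Fin N) (Fin N) (ZMod 2))
      = D * W := by
    ext p q
    rw [Matrix.mul_apply]
    by_cases h : q = i
    · have hsum : ∑ k, D p k * R k j = 0 := by
        have h2 := congrFun (congrFun hDR p) j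
        rwa [Matrix.mul_apply] at h2
      simp only [Matrix.of_apply, hWdef, if_pos h]
      exact hsum.symm
    · simp only [Matrix.of_apply, hWdef, if_neg h, Matrix.one_apply]
      simp [mul_ite, mul_one, mul_zero]
  intro a b
  rw [hDW]
  exact pivot_mul_aux D W hWu hWt a b
end

section
/- (Correctness of the compress optimization) Let D be an N×N matrix over ZMod 2 with D·D = 0, and suppose i is a negative index of D, i.e., there exists k such that (k,i) is a pivot pair of D. Let D' be the matrix obtained from D by setting every entry in the i-th row to zero. Then the pivot pairs of D' coincide exactly with the pivot pairs of D. -/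
namespace CompressAux

variable {N : ℕ}

lemma zmod2_ne_zero (x : ZMod 2) (h : x ≠ 0) : x = 1 := by revert x h; decide

lemma isLow_unique {M : Matrix (Fin N) (Fin N) (ZMod 2)} {i i' j : Fin N}
    (h : IsLow M i j) (h' : IsLow M i' j) : i = i' :=
  le_antisymm (h'.2 i h.1) (h.2 i' h'.1)

lemma exists_isLow {M : Matrix (Fin N) (Fin N) (ZMod 2)} {j p : Fin N} (hp : M p j ≠ 0) :
    ∃ m, IsLow M m j := by
  classical
  set s := Finset.univ.filter fun q => M q j ≠ 0 with hs
  have hne : s.Nonempty := ⟨p, by simp [hs, hp]⟩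
  refine ⟨s.max' hne, ?_, ?_⟩
  · have := s.max'_mem hne
    simpa [hs] using this
  · intro i' hi'
    exact s.le_max' i' (by simp [hs, hi'])

lemma upperTri_blockTriangular {W : Matrix (Fin N) (Fin N) (ZMod 2)} (h : UpperTri W) :
    W.BlockTriangular id := fun a b hb => h a b hb

lemma diag_ne_zero {W : Matrix (Fin N) (Fin N) (ZMod 2)} (hu : IsUnit W) (ht : UpperTri W)
    (j : Fin N) : W j j ≠ 0 := by
  have hdet : IsUnit W.det := (Matrix.isUnit_iff_isUnit_det _).1 hu
  have hdet' : W.det ≠ 0 := hdet.ne_zero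
  rw [Matrix.det_of_upperTriangular (upperTri_blockTriangular ht)] at hdet'
  exact Finset.prod_ne_zero_iff.1 hdet' j (Finset.mem_univ j)

/-- A nonempty sum of nonzero columns of a reduced matrix has a pivot, which is the
maximum of the pivots, attained at a unique column `q₀`. -/
lemma sum_low {R : Matrix (Fin N) (Fin N) (ZMod 2)} (hR : IsReducedMat R)
    {T : Finset (Fin N)} (hTne : T.Nonempty)
    (hT : ∀ q ∈ T, ∃ p, R p q ≠ 0) :
    ∃ q₀ ∈ T, ∃ m, IsLow R m q₀ ∧ (∑ q ∈ T, R m q) ≠ 0 ∧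
      ∀ p : Fin N, (∑ q ∈ T, R p q) ≠ 0 → p ≤ m := by
  classical
  obtain ⟨q₀, hq₀T, hq₀max⟩ := T.exists_max_image
    (fun q => (Finset.univ.filter fun p => R p q ≠ 0).max) hTne
  obtain ⟨p₀, hp₀⟩ := hT q₀ hq₀T
  obtain ⟨m, hm⟩ := exists_isLow hp₀
  have hmax : ∀ q ∈ T, ∀ m', IsLow R m' q → m' ≤ m := by
    intro q hq m' hm'
    have h1 : (m' : WithBot (Fin N)) ≤ (Finset.univ.filter fun p => R p q ≠ 0).max :=
      Finset.le_max (by simp [hm'.1])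
    have h2 : (Finset.univ.filter fun p => R p q₀ ≠ 0).max ≤ (m : WithBot (Fin N)) :=
      Finset.max_le (by intro a ha; simp only [Finset.mem_filter] at ha
                        exact WithBot.coe_le_coe.2 (hm.2 a ha.2))
    have := le_trans h1 (le_trans (hq₀max q hq) h2)
    exact_mod_cast this
  have hzero : ∀ q ∈ T, q ≠ q₀ → R m q = 0 := by
    intro q hq hne
    by_contra h
    obtain ⟨m', hm'⟩ := exists_isLow h
    have hle : m ≤ m' := hm'.2 m h
    have hle' : m' ≤ m := hmax q hq m' hm'
    have : m' = m := le_antisymm hle' hle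
    exact hne (hR m q q₀ (this ▸ hm') hm)
  refine ⟨q₀, hq₀T, m, hm, ?_, ?_⟩
  · rw [Finset.sum_eq_single_of_mem q₀ hq₀T hzero]
    exact hm.1
  · intro p hp
    by_contra hle
    push_neg at hle
    apply hp
    apply Finset.sum_eq_zero
    intro q hq
    by_contra h
    obtain ⟨m', hm'⟩ := exists_isLow h
    exact absurd (le_trans (hm'.2 p h) (hmax q hq m' hm')) (not_le.2 hle)


/-- Column `j` of `R * W` as a sum of nonzero columns of `R`. -/
lemma mul_col_sum {R W : Matrix (Fin N) (Fin N) (ZMod 2)} (p j : Fin N) :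
    (R * W) p j = ∑ q ∈ Finset.univ.filter (fun q => W q j ≠ 0 ∧ ∃ r, R r q ≠ 0), R p q := by
  classical
  rw [Matrix.mul_apply]
  rw [← Finset.sum_subset (Finset.filter_subset
    (fun q => W q j ≠ 0 ∧ ∃ r, R r q ≠ 0) Finset.univ)]
  · apply Finset.sum_congr rfl
    intro q hq
    simp only [Finset.mem_filter] at hq
    rw [zmod2_ne_zero _ hq.2.1, mul_one]
  · intro q _ hq
    simp only [Finset.mem_filter, Finset.mem_univ, true_and, not_and, not_exists, ne_eq,
      not_not] at hq
    by_cases hw : W q j = 0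
    · rw [hw, mul_zero]
    · rw [hq hw p, zero_mul]

/-- Key lemma: if `R` and `R * W` are both reduced, `W` invertible upper-triangular,
then they have the same pivots. -/
lemma lows_eq_of_mul_upperTri {R W : Matrix (Fin N) (Fin N) (ZMod 2)}
    (hRred : IsReducedMat R) (hu : IsUnit W) (ht : UpperTri W)
    (hred : IsReducedMat (R * W)) :
    ∀ (j a : Fin N), IsLow (R * W) a j ↔ IsLow R a j := by
  classical
  have main : ∀ n : ℕ, ∀ j : Fin N, (j : ℕ) = n → ∀ a, IsLow (R * W) a j ↔ IsLow R a j := by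
    intro n
    induction n using Nat.strong_induction_on with
    | _ n IH =>
      intro j hj a
      set T : Finset (Fin N) :=
        Finset.univ.filter (fun q => W q j ≠ 0 ∧ ∃ r, R r q ≠ 0) with hT
      have hsum : ∀ p, (R * W) p j = ∑ q ∈ T, R p q := fun p => mul_col_sum p j
      rcases T.eq_empty_or_nonempty with hTe | hTne
      · constructor
        · intro h
          exact absurd (by rw [hsum a, hTe, Finset.sum_empty]) h.1
        · intro h
          exfalso
          have : j ∈ T := by
            simp only [hT, Finset.mem_filter, Finset.mem_univ, true_and]
            exact ⟨diag_ne_zero hu ht j, ⟨a, h.1⟩⟩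
          rw [hTe] at this
          exact absurd this (Finset.notMem_empty j)
      · obtain ⟨q₀, hq₀T, m, hq₀low, hsne, hbound⟩ :=
          sum_low hRred hTne (fun q hq => by
            simp only [hT, Finset.mem_filter] at hq; exact hq.2.2)
        have hRWlow : IsLow (R * W) m j := by
          refine ⟨by rw [hsum]; exact hsne, fun p hp => hbound p (by rw [← hsum]; exact hp)⟩
        have hq₀j : q₀ = j := by
          by_contra hne
          have hle : q₀ ≤ j := by
            by_contra hlt
            push_neg at hlt
            have : W q₀ j = 0 := ht q₀ j hlt
            simp only [hT, Finset.mem_filter] at hq₀T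
            exact hq₀T.2.1 this
          have hlt : (q₀ : ℕ) < n := by
            have := lt_of_le_of_ne hle hne
            omega
          have hIH : IsLow (R * W) m q₀ := (IH (q₀ : ℕ) hlt q₀ rfl m).2 hq₀low
          exact hne (hred m q₀ j hIH hRWlow)
        subst hq₀j
        constructor
        · intro h
          have : a = m := isLow_unique h hRWlow
          subst this
          exact hq₀low
        · intro h
          have : a = m := isLow_unique h hq₀low
          subst this
          exact hRWlow
  exact fun j a => main (j : ℕ) j rfl a

lemma upperTri_inv {V : Matrix (Fin N) (Fin N) (ZMod 2)} (hu : IsUnit V) (ht : UpperTri V) :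
    UpperTri V⁻¹ := by
  have hdet : IsUnit V.det := (Matrix.isUnit_iff_isUnit_det _).1 hu
  have : Invertible V := Matrix.invertibleOfIsUnitDet V hdet
  have h := Matrix.blockTriangular_inv_of_blockTriangular (upperTri_blockTriangular ht)
  exact fun a b hb => h hb

lemma isUnit_inv {V : Matrix (Fin N) (Fin N) (ZMod 2)} (hu : IsUnit V) : IsUnit V⁻¹ := by
  have hdet : IsUnit V.det := (Matrix.isUnit_iff_isUnit_det _).1 hu
  have : Invertible V := Matrix.invertibleOfIsUnitDet V hdet
  exact Matrix.isUnit_nonsing_inv_iff.2 hu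

/-- Pivot pairs do not depend on the choice of reducing matrix `V`. -/
lemma pivot_unique {M V₁ V₂ : Matrix (Fin N) (Fin N) (ZMod 2)}
    (h1u : IsUnit V₁) (h1t : UpperTri V₁) (h1r : IsReducedMat (M * V₁))
    (h2u : IsUnit V₂) (h2t : UpperTri V₂) (h2r : IsReducedMat (M * V₂))
    (a b : Fin N) : IsLow (M * V₁) a b ↔ IsLow (M * V₂) a b := by
  have hdet1 : IsUnit V₁.det := (Matrix.isUnit_iff_isUnit_det _).1 h1u
  have hinv : V₁ * V₁⁻¹ = 1 := Matrix.mul_nonsing_inv _ hdet1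
  have hW : M * V₂ = (M * V₁) * (V₁⁻¹ * V₂) := by
    rw [Matrix.mul_assoc, ← Matrix.mul_assoc V₁, hinv, Matrix.one_mul]
  have hWt : UpperTri (V₁⁻¹ * V₂) := fun p q hq =>
    (Matrix.BlockTriangular.mul (upperTri_blockTriangular (upperTri_inv h1u h1t))
      (upperTri_blockTriangular h2t)) hq
  have hWu : IsUnit (V₁⁻¹ * V₂) := (isUnit_inv h1u).mul h2u
  rw [hW]
  exact (lows_eq_of_mul_upperTri h1r hWu hWt (hW ▸ h2r) b a).symm

/-- If `D * D = 0` and column `i` of the reduced matrix `R = D * V` is nonzero, then no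
column of `R` has pivot `i`. -/
lemma no_low_of_neg {D V : Matrix (Fin N) (Fin N) (ZMod 2)} (hD : D * D = 0)
    (hu : IsUnit V) (ht : UpperTri V) (hr : IsReducedMat (D * V)) {k i : Fin N}
    (hki : IsLow (D * V) k i) : ∀ j, ¬ IsLow (D * V) i j := by
  classical
  intro j hij
  set R := D * V with hR
  have hdet : IsUnit V.det := (Matrix.isUnit_iff_isUnit_det _).1 hu
  have hRV : R * V⁻¹ = D := by
    rw [hR, Matrix.mul_assoc, Matrix.mul_nonsing_inv _ hdet, Matrix.mul_one]
  have hDR : D * R = 0 := by rw [hR, ← Matrix.mul_assoc, hD, Matrix.zero_mul]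
  have hRWR : R * (V⁻¹ * R) = 0 := by rw [← Matrix.mul_assoc, hRV, hDR]
  have hWt : UpperTri V⁻¹ := upperTri_inv hu ht
  have hui : (V⁻¹ * R) i j ≠ 0 := by
    have : (V⁻¹ * R) i j = V⁻¹ i i * R i j := by
      rw [Matrix.mul_apply]
      apply Finset.sum_eq_single_of_mem i (Finset.mem_univ i)
      intro q _ hq
      rcases lt_or_gt_of_ne hq with hlt | hgt
      · rw [hWt i q hlt, zero_mul]
      · have : R q j = 0 := by
          by_contra h
          exact absurd (hij.2 q h) (not_le.2 hgt)
        rw [this, mul_zero]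
    rw [this]
    exact mul_ne_zero (diag_ne_zero (isUnit_inv hu) hWt i) hij.1
  set T : Finset (Fin N) := Finset.univ.filter (fun q => (V⁻¹ * R) q j ≠ 0 ∧ ∃ r, R r q ≠ 0) with hT
  have hiT : i ∈ T := by
    simp only [hT, Finset.mem_filter, Finset.mem_univ, true_and]
    exact ⟨hui, ⟨k, hki.1⟩⟩
  have hsum : ∀ p, (∑ q ∈ T, R p q) = 0 := by
    intro p
    have h0 : (R * (V⁻¹ * R)) p j = 0 := by rw [hRWR]; rfl
    rw [Matrix.mul_apply] at h0
    rw [← h0]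
    rw [← Finset.sum_subset (Finset.filter_subset
      (fun q => (V⁻¹ * R) q j ≠ 0 ∧ ∃ r, R r q ≠ 0) Finset.univ)]
    · apply Finset.sum_congr rfl
      intro q hq
      simp only [hT, Finset.mem_filter] at hq
      rw [zmod2_ne_zero _ hq.2.1, mul_one]
    · intro q _ hq
      simp only [hT, Finset.mem_filter, Finset.mem_univ, true_and, not_and, not_exists, ne_eq,
        not_not] at hq
      by_cases hw : (V⁻¹ * R) q j = 0
      · rw [hw, mul_zero]
      · rw [hq hw p, zero_mul]
  obtain ⟨q₀, hq₀T, m, hlow, hsne, _⟩ := sum_low hr ⟨i, hiT⟩ (fun q hq => by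
    simp only [hT, Finset.mem_filter] at hq; exact hq.2.2)
  exact hsne (hsum m)

/-- Zeroing row `i` when no column has pivot `i` preserves pivots and reducedness. -/
lemma compress_lows {D V : Matrix (Fin N) (Fin N) (ZMod 2)} {i : Fin N}
    (hno : ∀ j, ¬ IsLow (D * V) i j) :
    ∀ a b : Fin N,
      IsLow ((Matrix.of fun p q => if p = i then 0 else D p q) * V) a b ↔
        IsLow (D * V) a b := by
  classical
  have hentry : ∀ p j, ((Matrix.of fun p q => if p = i then 0 else D p q) * V) p j
      = if p = i then 0 else (D * V) p j := by
    intro p j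
    by_cases hp : p = i
    · simp [Matrix.mul_apply, hp]
    · simp [Matrix.mul_apply, hp]
  intro a b
  constructor
  · intro h
    have h1 := h.1
    rw [hentry] at h1
    have hai : a ≠ i := by intro hai; rw [if_pos hai] at h1; exact h1 rfl
    rw [if_neg hai] at h1
    refine ⟨h1, fun i' hi' => ?_⟩
    obtain ⟨m, hm⟩ := exists_isLow hi'
    have hmi : m ≠ i := fun he => hno b (he ▸ hm)
    have : ((Matrix.of fun p q => if p = i then 0 else D p q) * V) m b ≠ 0 := by
      rw [hentry, if_neg hmi]; exact hm.1
    exact le_trans (hm.2 i' hi') (h.2 m this)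
  · intro h
    have hai : a ≠ i := fun he => hno b (he ▸ h)
    refine ⟨by rw [hentry, if_neg hai]; exact h.1, fun i' hi' => ?_⟩
    rw [hentry] at hi'
    by_cases hii : i' = i
    · rw [if_pos hii] at hi'; exact absurd rfl hi'
    · rw [if_neg hii] at hi'
      exact h.2 i' hi'

end CompressAux

/-- Correctness of the compress optimization: if `D * D = 0` and `i` is a negative index of
`D` (i.e. `(k,i)` is a pivot pair of `D` for some `k`), then setting the `i`-th row of `D`
to zero does not change the pivot pairs. -/
theorem compress_correct {N : ℕ} (D : Matrix (Fin N) (Fin N) (ZMod 2)) (hD : D * D = 0)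
    (k i : Fin N) (hneg : IsPivotPairOf D k i) :
    ∀ a b : Fin N,
      IsPivotPairOf (Matrix.of fun p q => if p = i then 0 else D p q) a b ↔
        IsPivotPairOf D a b := by
  intro a b
  obtain ⟨V, hVu, hVt, hVr, hVl⟩ := hneg
  have hno := CompressAux.no_low_of_neg hD hVu hVt hVr hVl
  have hlows := CompressAux.compress_lows (D := D) (V := V) (i := i) hno
  have hD'r : IsReducedMat ((Matrix.of fun p q => if p = i then 0 else D p q) * V) := by
    intro i' j j' h h'
    exact hVr i' j j' ((hlows i' j).1 h) ((hlows i' j').1 h')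
  constructor
  · rintro ⟨V₂, h2u, h2t, h2r, h2l⟩
    have := (CompressAux.pivot_unique h2u h2t h2r hVu hVt hD'r a b).1 h2l
    exact ⟨V, hVu, hVt, hVr, (hlows a b).1 this⟩
  · rintro ⟨V₂, h2u, h2t, h2r, h2l⟩
    have := (CompressAux.pivot_unique h2u h2t h2r hVu hVt hVr a b).1 h2l
    exact ⟨V, hVu, hVt, hD'r, (hlows a b).2 this⟩
end

section
/- (Reduction from MaxCut, core of the NP-hardness of Sparse-Z2) Let G be a finite simple graph with vertex set V and m edges, and let M be the edge–vertex incidence matrix of G over ZMod 2 (rows indexed by edges, columns by vertices). Let W be the all-ones vector indexed by edges. Then the minimum, over all a : V → ZMod 2, of the number of nonzero entries of W + M·a equals m minus the maximum cut of G, where the maximum cut of G is the maximum, over all subsets S of V, of the number of edges of G with exactly one endpoint in S. -/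
/-- The edge–vertex incidence matrix of a simple graph `G` over `ZMod 2`: rows are indexed
by the edges of `G`, columns by the vertices, with entry `1` in position `(e,v)` exactly
when `v` is an endpoint of `e`. -/
def edgeIncMatrix {V : Type*} [DecidableEq V] (G : SimpleGraph V) :
    Matrix G.edgeSet V (ZMod 2) :=
  fun e v => if v ∈ (e : Sym2 V) then 1 else 0

lemma mulVec_edgeIncMatrix {V : Type*} [Fintype V] [DecidableEq V] (G : SimpleGraph V)
    (a : V → ZMod 2) (u w : V) (hne : u ≠ w) (he : s(u, w) ∈ G.edgeSet) :
    (edgeIncMatrix G).mulVec a ⟨s(u, w), he⟩ = a u + a w := by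
  unfold Matrix.mulVec dotProduct edgeIncMatrix
  calc (∑ v, (if v ∈ (((⟨s(u, w), he⟩ : G.edgeSet)) : Sym2 V) then (1 : ZMod 2) else 0) * a v)
      = ∑ v, ((if v = u then a v else 0) + (if v = w then a v else 0)) := by
        refine Finset.sum_congr rfl fun v _ => ?_
        rcases eq_or_ne v u with rfl | hu <;> rcases eq_or_ne v w with rfl | hw <;>
          simp_all [Sym2.mem_iff]
    _ = a u + a w := by
        rw [Finset.sum_add_distrib, Finset.sum_ite_eq' Finset.univ u (fun v => a v),
          Finset.sum_ite_eq' Finset.univ w (fun v => a v)]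
        simp

lemma key_iff {V : Type*} [Fintype V] [DecidableEq V] (G : SimpleGraph V)
    (a : V → ZMod 2) (e : G.edgeSet) :
    ((1 : ZMod 2) + (edgeIncMatrix G).mulVec a e ≠ 0) ↔
      ¬ (∃ u w : V, (e : Sym2 V) = s(u, w) ∧ a u = 1 ∧ ¬ a w = 1) := by
  obtain ⟨e, he⟩ := e
  induction e using Sym2.ind with
  | _ u w =>
    have hne : u ≠ w := (G.mem_edgeSet.mp he).ne
    rw [mulVec_edgeIncMatrix G a u w hne he]
    have hex : (∃ u' w' : V, ((⟨s(u, w), he⟩ : G.edgeSet) : Sym2 V) = s(u', w') ∧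
        a u' = 1 ∧ ¬ a w' = 1) ↔ ((a u = 1 ∧ ¬ a w = 1) ∨ (a w = 1 ∧ ¬ a u = 1)) := by
      constructor
      · rintro ⟨u', w', hs, h1, h2⟩
        simp only [Sym2.eq_iff] at hs
        rcases hs with ⟨rfl, rfl⟩ | ⟨rfl, rfl⟩
        · exact Or.inl ⟨h1, h2⟩
        · exact Or.inr ⟨h1, h2⟩
      · rintro (⟨h1, h2⟩ | ⟨h1, h2⟩)
        · exact ⟨u, w, rfl, h1, h2⟩
        · exact ⟨w, u, Sym2.eq_swap, h1, h2⟩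
    rw [hex]
    generalize a u = x; generalize a w = y
    revert x y; decide

lemma card_complement {V : Type*} [Fintype V] [DecidableEq V] (G : SimpleGraph V)
    (a : V → ZMod 2) :
    Nat.card {e : G.edgeSet // (1 : ZMod 2) + (edgeIncMatrix G).mulVec a e ≠ 0} =
      Nat.card G.edgeSet -
        Nat.card {e : G.edgeSet // ∃ u w : V, (e : Sym2 V) = s(u, w) ∧ a u = 1 ∧ ¬ a w = 1} := by
  classical
  haveI : Fintype G.edgeSet := Fintype.ofFinite _
  have h1 : Nat.card {e : G.edgeSet // (1 : ZMod 2) + (edgeIncMatrix G).mulVec a e ≠ 0} =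
      Nat.card {e : G.edgeSet //
        ¬ (∃ u w : V, (e : Sym2 V) = s(u, w) ∧ a u = 1 ∧ ¬ a w = 1)} :=
    Nat.card_congr (Equiv.subtypeEquivRight (key_iff G a))
  rw [h1]
  simp only [Nat.card_eq_fintype_card]
  exact Fintype.card_subtype_compl _

/-- Reduction from MaxCut: the minimum over all `a : V → ZMod 2` of the number of nonzero
entries of `W + M·a` (with `W` the all-ones vector and `M` the edge–vertex incidence matrix
of `G` over `ZMod 2`) equals the number of edges of `G` minus the maximum cut of `G`, the
latter being the maximum over all subsets `S` of the vertices of the number of edges with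
exactly one endpoint in `S`. -/
theorem sparseZ2_eq_m_sub_maxCut {V : Type*} [Fintype V] [DecidableEq V]
    (G : SimpleGraph V) :
    Finset.univ.inf' Finset.univ_nonempty
        (fun a : V → ZMod 2 =>
          Nat.card {e : G.edgeSet // (1 : ZMod 2) + (edgeIncMatrix G).mulVec a e ≠ 0}) =
      Nat.card G.edgeSet -
        Finset.univ.sup (fun S : Finset V =>
          Nat.card {e : G.edgeSet // ∃ u w : V, (e : Sym2 V) = s(u, w) ∧ u ∈ S ∧ w ∉ S}) := by
  classical
  haveI : Fintype G.edgeSet := Fintype.ofFinite _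
  set m := Nat.card G.edgeSet with hm
  set g : Finset V → ℕ := fun S =>
    Nat.card {e : G.edgeSet // ∃ u w : V, (e : Sym2 V) = s(u, w) ∧ u ∈ S ∧ w ∉ S} with hg
  -- for each a, the count is m - g (support of a)
  have hfa : ∀ a : V → ZMod 2,
      Nat.card {e : G.edgeSet // (1 : ZMod 2) + (edgeIncMatrix G).mulVec a e ≠ 0} =
        m - g (Finset.univ.filter (fun v => a v = 1)) := by
    intro a
    rw [card_complement G a, hg]
    have heq : Nat.card {e : G.edgeSet //
          ∃ u w : V, (e : Sym2 V) = s(u, w) ∧ a u = 1 ∧ ¬ a w = 1} =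
        Nat.card {e : G.edgeSet // ∃ u w : V, (e : Sym2 V) = s(u, w) ∧
          u ∈ Finset.univ.filter (fun v => a v = 1) ∧
          w ∉ Finset.univ.filter (fun v => a v = 1)} := by
      apply Nat.card_congr
      apply Equiv.subtypeEquivRight
      intro e
      simp [Finset.mem_filter]
    rw [heq]
  -- for each S, there is an a with support S
  have hSa : ∀ S : Finset V, Finset.univ.filter
      (fun v => (if v ∈ S then (1 : ZMod 2) else 0) = 1) = S := by
    intro S
    ext v
    by_cases hv : v ∈ S <;> simp [hv]
  have hgle : ∀ S : Finset V, g S ≤ m := by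
    intro S
    rw [hg, hm]
    simp only [Nat.card_eq_fintype_card]
    exact Fintype.card_subtype_le _
  apply le_antisymm
  · obtain ⟨S, -, hS⟩ := Finset.exists_mem_eq_sup (Finset.univ : Finset (Finset V))
      Finset.univ_nonempty g
    have h1 : Finset.univ.inf' Finset.univ_nonempty
        (fun a : V → ZMod 2 =>
          Nat.card {e : G.edgeSet // (1 : ZMod 2) + (edgeIncMatrix G).mulVec a e ≠ 0}) ≤
        Nat.card {e : G.edgeSet // (1 : ZMod 2) +
            (edgeIncMatrix G).mulVec (fun v => if v ∈ S then 1 else 0) e ≠ 0} :=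
      Finset.inf'_le _ (Finset.mem_univ _)
    have h2 : Nat.card {e : G.edgeSet // (1 : ZMod 2) +
        (edgeIncMatrix G).mulVec (fun v => if v ∈ S then 1 else 0) e ≠ 0} =
        m - Finset.univ.sup g := by
      rw [hfa, hSa, hS]
    exact h1.trans (le_of_eq h2)
  · rw [Finset.le_inf'_iff]
    intro a _
    rw [hfa a]
    exact Nat.sub_le_sub_left (Finset.le_sup (Finset.mem_univ _)) m
end

section
/- Let D be an N×N matrix over ZMod 2, V an invertible upper-triangular N×N matrix over ZMod 2 with R = D·V reduced. Then for every 1 ≤ j ≤ N, the number of nonzero columns among R_1, …, R_j equals the rank of the submatrix of D formed by its first j columns. -/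
open Matrix

/-- For a reduction `R = D * V` (`V` invertible upper-triangular, `R` reduced), the number
of nonzero columns among `R_1, …, R_j` equals the rank of the submatrix of `D` formed by
its first `j` columns. -/
theorem card_nonzero_columns_eq_rank {N : ℕ} (D V : Matrix (Fin N) (Fin N) (ZMod 2))
    (hV : IsUnit V) (hVt : UpperTri V) (hR : IsReducedMat (D * V)) :
    ∀ j : Fin N,
      Nat.card {k : Fin N // k ≤ j ∧ (fun p => (D * V) p k) ≠ 0} =
        (Matrix.of fun (p : Fin N) (q : {q : Fin N // q ≤ j}) => D p q.1).rank := by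
  intro j
  classical
  set R := D * V with hRdef
  -- diagonal entries of V are nonzero
  have hVdet : IsUnit V.det := (Matrix.isUnit_iff_isUnit_det V).mp hV
  have hVtri : V.BlockTriangular id := fun a b h => hVt a b h
  have hdiag : ∀ i : Fin N, V i i ≠ 0 := by
    have := Matrix.det_of_upperTriangular hVtri
    rw [this] at hVdet
    intro i
    exact Finset.prod_ne_zero_iff.mp hVdet.ne_zero i (Finset.mem_univ i)
  -- submatrix product identity
  have hAB : (Matrix.of fun p (q : {q : Fin N // q ≤ j}) => D p q.1) *
      (Matrix.of fun (p q : {q : Fin N // q ≤ j}) => V p.1 q.1) =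
      Matrix.of fun p (q : {q : Fin N // q ≤ j}) => R p q.1 := by
    ext p q
    simp only [Matrix.mul_apply, Matrix.of_apply, hRdef]
    calc ∑ m : {q : Fin N // q ≤ j}, D p m.1 * V m.1 q.1
        = ∑ m ∈ Finset.univ.filter (fun m : Fin N => m ≤ j), D p m * V m q.1 :=
          (Finset.sum_subtype (Finset.univ.filter (fun m : Fin N => m ≤ j)) (fun m => by simp) (fun m => D p m * V m q.1)).symm
      _ = ∑ m : Fin N, D p m * V m q.1 := by
          apply Finset.sum_filter_of_ne
          intro m _ hm
          by_contra hmj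
          exact hm (by rw [hVt m q.1 (lt_of_le_of_lt q.2 (lt_of_not_ge hmj)), mul_zero])
  have hBtri : (Matrix.of fun (p q : {q : Fin N // q ≤ j}) => V p.1 q.1).BlockTriangular id :=
    fun a b h => hVt a.1 b.1 (by exact_mod_cast h)
  have hBdet : IsUnit (Matrix.of fun (p q : {q : Fin N // q ≤ j}) => V p.1 q.1).det := by
    rw [Matrix.det_of_upperTriangular hBtri, isUnit_iff_ne_zero, Finset.prod_ne_zero_iff]
    exact fun q _ => hdiag q.1
  have hrk : (Matrix.of fun p (q : {q : Fin N // q ≤ j}) => R p q.1).rank =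
      (Matrix.of fun p (q : {q : Fin N // q ≤ j}) => D p q.1).rank := by
    rw [← hAB]; exact Matrix.rank_mul_eq_left_of_isUnit_det _ _ hBdet
  -- nonzero columns with pivots
  set S := {k : Fin N // k ≤ j ∧ (fun p => R p k) ≠ 0} with hS
  set f : S → (Fin N → ZMod 2) := fun k p => R p k.1 with hf
  have hsupp : ∀ k : S, (Finset.univ.filter (fun p => R p k.1 ≠ 0)).Nonempty := by
    intro k
    obtain ⟨p, hp⟩ := Function.ne_iff.mp k.2.2
    exact ⟨p, Finset.mem_filter.mpr ⟨Finset.mem_univ p, hp⟩⟩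
  set low : S → Fin N := fun k => (Finset.univ.filter (fun p => R p k.1 ≠ 0)).max' (hsupp k)
    with hlow
  have hislow : ∀ k : S, IsLow R (low k) k.1 := by
    intro k
    constructor
    · have := (Finset.univ.filter (fun p => R p k.1 ≠ 0)).max'_mem (hsupp k)
      exact (Finset.mem_filter.mp this).2
    · intro i' hi'
      exact Finset.le_max' _ i' (Finset.mem_filter.mpr ⟨Finset.mem_univ i', hi'⟩)
  have hli : LinearIndependent (ZMod 2) f := by
    rw [Fintype.linearIndependent_iff]
    intro g hg
    by_contra hcon
    push_neg at hcon
    obtain ⟨k₁, hk₁⟩ := hcon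
    set T := Finset.univ.filter (fun k : S => g k ≠ 0) with hT
    have hTne : T.Nonempty := ⟨k₁, Finset.mem_filter.mpr ⟨Finset.mem_univ _, hk₁⟩⟩
    obtain ⟨k₀, hk₀T, hk₀max⟩ := Finset.exists_max_image T low hTne
    set i₀ := low k₀ with hi₀
    have hrow : (∑ k : S, g k • f k) i₀ = 0 := by rw [hg]; rfl
    rw [Finset.sum_apply] at hrow
    have heval : ∀ k : S, k ≠ k₀ → (g k • f k) i₀ = 0 := by
      intro k hk
      by_cases hgk : g k = 0
      · simp [hgk]
      · by_cases hRk : R i₀ k.1 = 0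
        · simp [hf, hRk]
        · exfalso
          have hkT : k ∈ T := Finset.mem_filter.mpr ⟨Finset.mem_univ _, hgk⟩
          have h1 : i₀ ≤ low k := (hislow k).2 i₀ hRk
          have h2 : low k ≤ i₀ := hk₀max k hkT
          have h3 : low k = i₀ := le_antisymm h2 h1
          have := hR i₀ k.1 k₀.1 (h3 ▸ hislow k) (hislow k₀)
          exact hk (Subtype.ext this)
    rw [Finset.sum_eq_single_of_mem k₀ (Finset.mem_univ _)
      (fun k _ hk => heval k hk)] at hrow
    have hgk₀ : g k₀ ≠ 0 := (Finset.mem_filter.mp hk₀T).2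
    have hRk₀ : R i₀ k₀.1 ≠ 0 := (hislow k₀).1
    exact mul_ne_zero hgk₀ hRk₀ (by simpa [hf, smul_eq_mul] using hrow)
  -- rank of R-submatrix = card S
  have hspan : Submodule.span (ZMod 2)
        (Set.range (Matrix.of fun p (q : {q : Fin N // q ≤ j}) => R p q.1)ᵀ) =
      Submodule.span (ZMod 2) (Set.range f) := by
    apply le_antisymm
    · rw [Submodule.span_le]
      rintro _ ⟨q, rfl⟩
      by_cases hq : (fun p => R p q.1) = 0
      · have hz : (Matrix.of fun p (q : {q : Fin N // q ≤ j}) => R p q.1)ᵀ q = 0 := by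
          funext p; exact congrFun hq p
        rw [hz]; exact Submodule.zero_mem _
      · exact Submodule.subset_span ⟨⟨q.1, q.2, hq⟩, rfl⟩
    · rw [Submodule.span_le]
      rintro _ ⟨k, rfl⟩
      exact Submodule.subset_span ⟨⟨k.1, k.2.1⟩, rfl⟩
  have hrk2 : (Matrix.of fun p (q : {q : Fin N // q ≤ j}) => R p q.1).rank = Nat.card S := by
    rw [Matrix.rank_eq_finrank_span_cols,
      show (Matrix.of fun p (q : {q : Fin N // q ≤ j}) => R p q.1).col =
        (Matrix.of fun p (q : {q : Fin N // q ≤ j}) => R p q.1)ᵀ from rfl, hspan, finrank_span_eq_card hli,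
      Nat.card_eq_fintype_card]
  rw [← hrk2, hrk]
end
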